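/- arXiv:1012.0406 — 3 statements merged into one kernel-verified Lean document; each statement's English description precedes it below -/
import Mathlib

section
/- For any partition ν with largest part ν_1 ≤ n, the elementary symmetric polynomial e_ν(x_1,...,x_n) can be written as Σ_{μ ≤ ν'} a_{νμ} m_μ(x_1,...,x_n) where the a_{νμ} are nonnegative integers, the sum is over partitions μ dominated by the conjugate ν', and a_{νν'} = 1. -/
open Finset MvPolynomial
open scoped Classical

noncomputable section

/-- The conjugate (transpose) partition of `ν` (encoded as an antitone function
`Fin l → ℕ`): `ν'_j = #{i : ν_i > j}` (`0`-based `j`). -/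
def conjP {l : ℕ} (ν : Fin l → ℕ) (j : ℕ) : ℕ :=
  (Finset.univ.filter fun i : Fin l => j < ν i).card

/-- The monomial symmetric polynomial `m_μ(x_1, …, x_n)` over `ℤ`: the sum of all distinct
monomials obtained by permuting the exponent vector `μ`. -/
def msymP (n : ℕ) (μ : Fin n → ℕ) : MvPolynomial (Fin n) ℤ :=
  ∑ f ∈ (Finset.univ : Finset (Equiv.Perm (Fin n))).image (fun σ : Equiv.Perm (Fin n) => μ ∘ ⇑σ),
    ∏ i : Fin n, X i ^ f i

section Auxiliary


lemma card_filter_val_lt (n c : ℕ) (hc : c ≤ n) :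
    ((univ : Finset (Fin n)).filter fun i : Fin n => (i : ℕ) < c).card = c := by
  have h : ((univ : Finset (Fin n)).filter fun i : Fin n => (i : ℕ) < c)
      = Finset.map (Fin.castLEEmb hc) univ := by
    ext x
    simp only [mem_filter, mem_univ, true_and, Finset.mem_map, Fin.castLEEmb_apply]
    constructor
    · intro hx
      exact ⟨⟨(x : ℕ), hx⟩, by ext; rfl⟩
    · rintro ⟨y, rfl⟩
      exact y.isLt
  rw [h, Finset.card_map, Finset.card_univ, Fintype.card_fin]

lemma filter_le_eq (n : ℕ) (j : Fin n) :
    (univ : Finset (Fin n)).filter (· ≤ j)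
      = (univ : Finset (Fin n)).filter fun i : Fin n => (i : ℕ) < (j : ℕ) + 1 := by
  ext x
  simp only [mem_filter, mem_univ, true_and, Fin.le_def]
  omega

lemma card_filter_le (n : ℕ) (j : Fin n) :
    ((univ : Finset (Fin n)).filter (· ≤ j)).card = (j : ℕ) + 1 := by
  rw [filter_le_eq, card_filter_val_lt n _ j.isLt]

lemma card_filter_le_lt (n : ℕ) (j : Fin n) (m : ℕ) (hm : m ≤ n) :
    (((univ : Finset (Fin n)).filter (· ≤ j)).filter fun i : Fin n => (i : ℕ) < m).card
      = min m ((j : ℕ) + 1) := by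
  have h : (((univ : Finset (Fin n)).filter (· ≤ j)).filter fun i : Fin n => (i : ℕ) < m)
      = (univ : Finset (Fin n)).filter fun i : Fin n => (i : ℕ) < min m ((j : ℕ) + 1) := by
    ext x
    simp only [mem_filter, mem_univ, true_and, Fin.le_def, lt_min_iff]
    omega
  rw [h, card_filter_val_lt]
  exact min_le_of_left_le hm

lemma ind_apply {n : ℕ} (S : Finset (Fin n)) (i : Fin n) :
    (∑ j ∈ S, Finsupp.single j (1:ℕ)) i = if i ∈ S then 1 else 0 := by
  rw [Finsupp.finset_sum_apply]
  simp only [Finsupp.single_apply]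
  exact Finset.sum_ite_eq' S i (fun _ => 1)

lemma sum_ind {n : ℕ} (S T : Finset (Fin n)) :
    ∑ i ∈ T, (∑ j ∈ S, Finsupp.single j (1:ℕ)) i = (S ∩ T).card := by
  simp only [ind_apply]
  rw [Finset.sum_ite_mem T S (fun _ => 1), Finset.sum_const, smul_eq_mul, mul_one,
    Finset.inter_comm]

lemma support_bound {n : ℕ} : ∀ {l : ℕ} (ν : Fin l → ℕ) (d : Fin n →₀ ℕ),
    d ∈ (∏ j, esymm (Fin n) ℕ (ν j)).support → ∀ T : Finset (Fin n),
    ∑ i ∈ T, d i ≤ ∑ j, min (ν j) T.card := by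
  intro l
  induction l with
  | zero =>
    intro ν d hd T
    simp only [Finset.univ_eq_empty, Finset.prod_empty] at hd
    rw [MvPolynomial.mem_support_iff, MvPolynomial.coeff_one] at hd
    have hd0 : d = 0 := by
      by_contra h
      rw [if_neg (fun h' => h h'.symm)] at hd
      exact hd rfl
    subst hd0
    simp
  | succ l ih =>
    intro ν d hd T
    rw [Fin.prod_univ_succ] at hd
    have h2 := MvPolynomial.support_mul _ _ hd
    rw [Finset.mem_add] at h2
    obtain ⟨u, hu, v, hv, rfl⟩ := h2
    rw [MvPolynomial.support_esymm] at hu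
    obtain ⟨S, hS, rfl⟩ := Finset.mem_image.mp hu
    rw [Finset.mem_powersetCard_univ] at hS
    have h3 : ∀ i ∈ T, ((∑ j ∈ S, Finsupp.single j (1:ℕ)) + v) i
        = (∑ j ∈ S, Finsupp.single j (1:ℕ)) i + v i := fun i _ => Finsupp.add_apply _ _ _
    rw [Finset.sum_congr rfl h3, Finset.sum_add_distrib, Fin.sum_univ_succ]
    refine Nat.add_le_add ?_ (ih _ v hv T)
    rw [sum_ind]
    exact le_min ((Finset.card_le_card Finset.inter_subset_left).trans_eq hS)
      (Finset.card_le_card Finset.inter_subset_right)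

lemma support_total {n : ℕ} : ∀ {l : ℕ} (ν : Fin l → ℕ) (d : Fin n →₀ ℕ),
    d ∈ (∏ j, esymm (Fin n) ℕ (ν j)).support →
    ∑ i : Fin n, d i = ∑ j, ν j := by
  intro l
  induction l with
  | zero =>
    intro ν d hd
    simp only [Finset.univ_eq_empty, Finset.prod_empty] at hd
    rw [MvPolynomial.mem_support_iff, MvPolynomial.coeff_one] at hd
    have hd0 : d = 0 := by
      by_contra h
      rw [if_neg (fun h' => h h'.symm)] at hd
      exact hd rfl
    subst hd0
    simp
  | succ l ih =>
    intro ν d hd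
    rw [Fin.prod_univ_succ] at hd
    have h2 := MvPolynomial.support_mul _ _ hd
    rw [Finset.mem_add] at h2
    obtain ⟨u, hu, v, hv, rfl⟩ := h2
    rw [MvPolynomial.support_esymm] at hu
    obtain ⟨S, hS, rfl⟩ := Finset.mem_image.mp hu
    rw [Finset.mem_powersetCard_univ] at hS
    have h3 : ∀ i ∈ (univ : Finset (Fin n)), ((∑ j ∈ S, Finsupp.single j (1:ℕ)) + v) i
        = (∑ j ∈ S, Finsupp.single j (1:ℕ)) i + v i := fun i _ => Finsupp.add_apply _ _ _
    rw [Finset.sum_congr rfl h3, Finset.sum_add_distrib, Fin.sum_univ_succ, sum_ind,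
      Finset.inter_univ, hS, ih _ v hv]

lemma conjP_eq_sum {l : ℕ} (ν : Fin l → ℕ) (j : ℕ) :
    conjP ν j = ∑ m : Fin l, if j < ν m then 1 else 0 :=
  Finset.card_filter _ _

lemma conj_partial_sum {n l : ℕ} (ν : Fin l → ℕ) (hν1 : ∀ j, ν j ≤ n) (j : Fin n) :
    ∑ i ∈ univ.filter (· ≤ j), conjP ν (i : ℕ) = ∑ m : Fin l, min (ν m) ((j:ℕ)+1) := by
  have h1 : ∑ i ∈ univ.filter (· ≤ j), conjP ν (i : ℕ)
      = ∑ i ∈ univ.filter (· ≤ j), ∑ m : Fin l, if (i:ℕ) < ν m then 1 else 0 :=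
    Finset.sum_congr rfl fun i _ => conjP_eq_sum ν (i:ℕ)
  rw [h1, Finset.sum_comm]
  refine Finset.sum_congr rfl fun m _ => ?_
  rw [← Finset.card_filter]
  exact card_filter_le_lt n j (ν m) (hν1 m)

lemma conj_total {n l : ℕ} (ν : Fin l → ℕ) (hν1 : ∀ j, ν j ≤ n) :
    ∑ i : Fin n, conjP ν (i : ℕ) = ∑ j, ν j := by
  have h1 : ∑ i : Fin n, conjP ν (i : ℕ)
      = ∑ i : Fin n, ∑ m : Fin l, if (i:ℕ) < ν m then 1 else 0 :=
    Finset.sum_congr rfl fun i _ => conjP_eq_sum ν (i:ℕ)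
  rw [h1, Finset.sum_comm]
  refine Finset.sum_congr rfl fun m _ => ?_
  rw [← Finset.card_filter]
  exact card_filter_val_lt n (ν m) (hν1 m)

lemma coeff_conj {n : ℕ} : ∀ {l : ℕ} (ν : Fin l → ℕ), (∀ j, ν j ≤ n) →
    coeff (Finsupp.equivFunOnFinite.symm fun i : Fin n => conjP ν (i:ℕ))
      (∏ j, esymm (Fin n) ℕ (ν j)) = 1 := by
  intro l
  induction l with
  | zero =>
    intro ν _
    have h0 : (Finsupp.equivFunOnFinite.symm fun i : Fin n => conjP ν (i:ℕ)) = 0 := by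
      ext i
      simp [conjP]
    rw [h0]
    simp
  | succ l ih =>
    intro ν hν1
    set ν' : Fin l → ℕ := ν ∘ Fin.succ with hν'
    set S₀ : Finset (Fin n) := univ.filter fun i : Fin n => (i:ℕ) < ν 0 with hS₀
    set D : Fin n →₀ ℕ := Finsupp.equivFunOnFinite.symm fun i : Fin n => conjP ν (i:ℕ) with hD
    set D' : Fin n →₀ ℕ := Finsupp.equivFunOnFinite.symm fun i : Fin n => conjP ν' (i:ℕ) with hD'
    have hS₀card : S₀.card = ν 0 := card_filter_val_lt n (ν 0) (hν1 0)
    have step1 : ∀ i : Fin n,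
        conjP ν (i:ℕ) = (if (i:ℕ) < ν 0 then 1 else 0) + conjP ν' (i:ℕ) := by
      intro i
      rw [conjP_eq_sum, Fin.sum_univ_succ, conjP_eq_sum]
      rfl
    have step2 : D = (∑ j ∈ S₀, Finsupp.single j (1:ℕ)) + D' := by
      ext i
      rw [Finsupp.add_apply, ind_apply]
      simp only [hD, hD', Finsupp.coe_equivFunOnFinite_symm]
      rw [step1 i]
      congr 1
      simp [hS₀]
    have hprod : ∏ j : Fin (l+1), esymm (Fin n) ℕ (ν j)
        = esymm (Fin n) ℕ (ν 0) * ∏ j : Fin l, esymm (Fin n) ℕ (ν' j) := by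
      rw [Fin.prod_univ_succ]; rfl
    rw [hprod, esymm_eq_sum_monomial, Finset.sum_mul, coeff_sum]
    have hterm : ∀ t : Finset (Fin n),
        coeff D ((monomial (∑ i ∈ t, Finsupp.single i (1:ℕ))) 1 * ∏ j : Fin l, esymm (Fin n) ℕ (ν' j))
        = if (∑ i ∈ t, Finsupp.single i (1:ℕ)) ≤ D
            then coeff (D - ∑ i ∈ t, Finsupp.single i (1:ℕ)) (∏ j : Fin l, esymm (Fin n) ℕ (ν' j))
            else 0 := by
      intro t
      rw [mul_comm, coeff_mul_monomial']
      split <;> simp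
    rw [Finset.sum_congr rfl fun t _ => hterm t]
    rw [Finset.sum_eq_single S₀ ?_ ?_]
    · rw [if_pos (step2 ▸ self_le_add_right _ _)]
      have : D - ∑ j ∈ S₀, Finsupp.single j (1:ℕ) = D' := by
        rw [step2, add_tsub_cancel_left]
      rw [this]
      exact ih ν' fun j => hν1 j.succ
    · -- other terms vanish
      intro b hb hbne
      rw [Finset.mem_powersetCard_univ] at hb
      split
      case isFalse => rfl
      case isTrue hle =>
        by_contra hne
        have hsupp : D - ∑ i ∈ b, Finsupp.single i (1:ℕ)
            ∈ (∏ j : Fin l, esymm (Fin n) ℕ (ν' j)).support := mem_support_iff.mpr hne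
        -- find j ∈ S₀ \ b
        have hss : ¬ S₀ ⊆ b := by
          intro hsub
          exact hbne (Finset.eq_of_subset_of_card_le hsub (le_of_eq (hb.trans hS₀card.symm))).symm
        obtain ⟨j, hjS₀, hjb⟩ := Finset.not_subset.mp hss
        have hjlt : (j:ℕ) < ν 0 := by
          simpa [hS₀] using hjS₀
        set T : Finset (Fin n) := univ.filter (· ≤ j) with hT
        have hTcard : T.card = (j:ℕ) + 1 := card_filter_le n j
        have key := support_bound ν' _ hsupp T
        rw [hTcard] at key
        -- sum of D over T
        have hDsum : ∑ i ∈ T, D i = ((j:ℕ)+1) + ∑ m : Fin l, min (ν' m) ((j:ℕ)+1) := by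
          have : ∑ i ∈ T, D i = ∑ i ∈ T, conjP ν (i:ℕ) := by
            refine Finset.sum_congr rfl fun i _ => ?_
            simp [hD]
          rw [this, conj_partial_sum ν hν1 j, Fin.sum_univ_succ,
            min_eq_right (by omega : (j:ℕ)+1 ≤ ν 0)]
          rfl
        have hsplit : ∑ i ∈ T, D i
            = ∑ i ∈ T, (D - ∑ i ∈ b, Finsupp.single i (1:ℕ)) i + ∑ i ∈ T, (∑ i ∈ b, Finsupp.single i (1:ℕ)) i := by
          rw [← Finset.sum_add_distrib]
          refine Finset.sum_congr rfl fun i _ => ?_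
          rw [Finsupp.tsub_apply]
          exact (Nat.sub_add_cancel (hle i)).symm
        have hbT : ∑ i ∈ T, (∑ i ∈ b, Finsupp.single i (1:ℕ)) i ≤ (j:ℕ) := by
          rw [sum_ind]
          have hsub : b ∩ T ⊆ T.erase j := by
            intro x hx
            rw [Finset.mem_inter] at hx
            exact Finset.mem_erase.mpr ⟨fun h => hjb (h ▸ hx.1), hx.2⟩
          calc (b ∩ T).card ≤ (T.erase j).card := Finset.card_le_card hsub
            _ = (j:ℕ) := by
                rw [Finset.card_erase_of_mem (by simp [hT]), hTcard]
                omega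
        omega
    · intro habs
      exact absurd (Finset.mem_powersetCard_univ.mpr hS₀card) habs


lemma prod_esymm_symmetric (n l : ℕ) (ν : Fin l → ℕ) :
    (∏ j, esymm (Fin n) ℕ (ν j)).IsSymmetric := by
  refine Finset.prod_induction _ _ (fun a b ha hb => ha.mul hb) (fun e => ?_)
    (fun j _ => esymm_isSymmetric _ _ _)
  rw [map_one]

lemma coeff_perm {n : ℕ} {p : MvPolynomial (Fin n) ℕ} (hp : p.IsSymmetric)
    (g : Fin n → ℕ) (σ : Equiv.Perm (Fin n)) :
    coeff (Finsupp.equivFunOnFinite.symm (g ∘ ⇑σ)) p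
      = coeff (Finsupp.equivFunOnFinite.symm g) p := by
  have h := coeff_rename_mapDomain ⇑σ σ.injective p (Finsupp.equivFunOnFinite.symm (g ∘ ⇑σ))
  rw [hp σ] at h
  rw [← h]
  congr 1
  ext j
  conv_lhs => rw [show j = σ (σ.symm j) from (σ.apply_symm_apply j).symm]
  rw [Finsupp.mapDomain_apply σ.injective]
  simp [Finsupp.coe_equivFunOnFinite_symm]

def sdP {n : ℕ} (g : Fin n → ℕ) : Equiv.Perm (Fin n) :=
  (Fin.revPerm).trans (Tuple.sort g)

def sd {n : ℕ} (g : Fin n → ℕ) : Fin n → ℕ := g ∘ ⇑(sdP g)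

lemma antitone_sd {n : ℕ} (g : Fin n → ℕ) : Antitone (sd g) :=
  fun _ _ hij => Tuple.monotone_sort g (Fin.rev_le_rev.mpr hij)

lemma antitone_comp_perm_unique {n : ℕ} {μ : Fin n → ℕ} (hμ : Antitone μ)
    (ρ : Equiv.Perm (Fin n)) (h : Antitone (μ ∘ ⇑ρ)) : μ ∘ ⇑ρ = μ := by
  have h2 : Monotone (μ ∘ ⇑((Fin.revPerm : Equiv.Perm (Fin n)).trans ρ)) :=
    fun _ _ hij => h (Fin.rev_le_rev.mpr hij)
  have h3 : Monotone (μ ∘ ⇑(Fin.revPerm : Equiv.Perm (Fin n))) :=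
    fun _ _ hij => hμ (Fin.rev_le_rev.mpr hij)
  have h4 := Tuple.unique_monotone h2 h3
  funext x
  have := congrFun h4 (Fin.rev x)
  simpa [Fin.rev_rev] using this

lemma sd_of_perm {n : ℕ} (g μ : Fin n → ℕ) (hμ : Antitone μ)
    (τ : Equiv.Perm (Fin n)) (h : g = μ ∘ ⇑τ) : sd g = μ := by
  have h1 : sd g = μ ∘ ⇑((sdP g).trans τ) := by
    funext x
    simp [sd, h, Function.comp]
  rw [h1]
  exact antitone_comp_perm_unique hμ _ (h1 ▸ antitone_sd g)

lemma mem_orbit_iff_sd {n : ℕ} (μ g : Fin n → ℕ) (hμ : Antitone μ) :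
    (g ∈ (Finset.univ : Finset (Equiv.Perm (Fin n))).image
        (fun σ : Equiv.Perm (Fin n) => μ ∘ ⇑σ)) ↔ sd g = μ := by
  constructor
  · intro h
    obtain ⟨σ, -, rfl⟩ := Finset.mem_image.mp h
    exact sd_of_perm _ μ hμ σ rfl
  · intro h
    refine Finset.mem_image.mpr ⟨(sdP g)⁻¹, Finset.mem_univ _, ?_⟩
    funext x
    rw [← h]
    simp [sd, Function.comp]

lemma prod_X_pow (n : ℕ) (f : Fin n → ℕ) :
    (∏ i : Fin n, (X i : MvPolynomial (Fin n) ℤ) ^ f i)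
      = monomial (Finsupp.equivFunOnFinite.symm f) 1 := by
  set d := Finsupp.equivFunOnFinite.symm f with hd
  have hf : ∀ i, f i = d i := fun i => (congrFun (Finsupp.coe_equivFunOnFinite_symm f) i).symm
  rw [← prod_X_pow_eq_monomial]
  simp only [hf]
  exact (Finset.prod_subset (Finset.subset_univ d.support)
    (fun x _ hx => by rw [Finsupp.notMem_support_iff.mp hx, pow_zero])).symm

lemma coeff_msymP {n : ℕ} (μ : Fin n → ℕ) (hμ : Antitone μ) (d : Fin n →₀ ℕ) :
    coeff d (msymP n μ) = if sd ⇑d = μ then 1 else 0 := by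
  rw [msymP, coeff_sum]
  have h1 : ∀ f : Fin n → ℕ,
      coeff d (∏ i : Fin n, (X i : MvPolynomial (Fin n) ℤ) ^ f i)
        = if f = ⇑d then 1 else 0 := by
    intro f
    rw [prod_X_pow, coeff_monomial]
    congr 1
    rw [eq_iff_iff]
    constructor
    · intro h
      rw [← h]
      funext i
      exact (congrFun (Finsupp.coe_equivFunOnFinite_symm f) i)
    · rintro rfl
      exact Finsupp.equivFunOnFinite.symm_apply_apply d
  rw [Finset.sum_congr rfl fun f _ => h1 f, Finset.sum_ite_eq']
  by_cases h : (⇑d) ∈ (Finset.univ : Finset (Equiv.Perm (Fin n))).image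
      (fun σ : Equiv.Perm (Fin n) => μ ∘ ⇑σ)
  · rw [if_pos h, if_pos ((mem_orbit_iff_sd μ (⇑d) hμ).mp h)]
  · rw [if_neg h, if_neg (fun hc => h ((mem_orbit_iff_sd μ (⇑d) hμ).mpr hc))]


end Auxiliary

/-- For any partition `ν = (ν_1 ≥ … ≥ ν_ℓ)` (positive parts) with
`ν_1 ≤ n`, there are nonnegative integers `a_{νμ}` such that
`e_ν(x_1,…,x_n) = ∑_{μ ≤ ν'} a_{νμ} m_μ(x_1,…,x_n)`, the sum being over partitions `μ`
of `|ν|` (with at most `n` parts, encoded as antitone functions `Fin n → Fin (|ν|+1)`)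
dominated by the conjugate `ν'`, and `a_{νν'} = 1`. -/
theorem stmt1 (n l : ℕ) (hn : 1 ≤ n)
    (ν : Fin l → ℕ) (hν : Antitone ν) (hpos : ∀ j, 1 ≤ ν j) (hν1 : ∀ j, ν j ≤ n) :
    ∃ a : (Fin n → ℕ) → ℕ,
      (∏ j : Fin l, esymm (Fin n) ℤ (ν j))
        = ∑ μ ∈ (Finset.univ : Finset (Fin n → Fin ((∑ j : Fin l, ν j) + 1))).filter
            (fun μ => Antitone (fun i => (μ i : ℕ)) ∧
              (∑ i : Fin n, (μ i : ℕ)) = ∑ j : Fin l, ν j ∧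
              ∀ k : Fin n, ∑ i ∈ Finset.univ.filter (· ≤ k), (μ i : ℕ)
                ≤ ∑ i ∈ Finset.univ.filter (· ≤ k), conjP ν (i : ℕ)),
            (a (fun i => (μ i : ℕ)) : ℤ) • msymP n (fun i => (μ i : ℕ))
      ∧ a (fun i : Fin n => conjP ν (i : ℕ)) = 1 := by
  have hν1' : ∀ j, ν j ≤ n := hν1
  set N := (∑ j : Fin l, ν j) with hN
  set Q : MvPolynomial (Fin n) ℕ := ∏ j, esymm (Fin n) ℕ (ν j) with hQ
  have Qsym : Q.IsSymmetric := prod_esymm_symmetric n l ν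
  refine ⟨fun μfun => coeff (Finsupp.equivFunOnFinite.symm μfun) Q, ?_, coeff_conj ν hν1⟩
  have hmap : (∏ j : Fin l, esymm (Fin n) ℤ (ν j)) = MvPolynomial.map (Nat.castRingHom ℤ) Q := by
    rw [hQ, map_prod]
    exact Finset.prod_congr rfl fun j _ => (map_esymm (Fin n) ℕ (ν j) (Nat.castRingHom ℤ)).symm
  apply MvPolynomial.ext
  intro d
  rw [hmap, coeff_map, coeff_sum]
  have hcast : (Nat.castRingHom ℤ) (coeff d Q) = (((coeff d Q : ℕ) : ℤ)) := rfl
  rw [hcast]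
  have hsymmd : Finsupp.equivFunOnFinite.symm (⇑d) = d :=
    Finsupp.equivFunOnFinite.symm_apply_apply d
  have F1 : coeff (Finsupp.equivFunOnFinite.symm (sd ⇑d)) Q = coeff d Q := by
    have := coeff_perm Qsym (⇑d) (sdP ⇑d)
    rw [hsymmd] at this
    exact this
  by_cases hc : coeff d Q = 0
  · rw [hc, Nat.cast_zero]
    symm
    apply Finset.sum_eq_zero
    intro μ hμF
    have hant : Antitone (fun i => ((μ i : ℕ))) := (Finset.mem_filter.mp hμF).2.1
    rw [coeff_smul, coeff_msymP _ hant d, smul_eq_mul]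
    by_cases h : sd ⇑d = fun i => ((μ i : ℕ))
    · rw [if_pos h, mul_one, ← h]
      show ((coeff (Finsupp.equivFunOnFinite.symm (sd ⇑d)) Q : ℕ) : ℤ) = 0
      rw [F1, hc, Nat.cast_zero]
    · rw [if_neg h, mul_zero]
  · have hdsupp : d ∈ Q.support := mem_support_iff.mpr hc
    have htot : ∑ i : Fin n, d i = N := support_total ν d hdsupp
    have hbound : ∀ i, sd ⇑d i ≤ N := by
      intro i
      have h1 : (⇑d) (sdP ⇑d i) ≤ ∑ i : Fin n, d i :=
        Finset.single_le_sum (fun _ _ => Nat.zero_le _) (mem_univ _)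
      exact le_of_le_of_eq h1 htot
    set μ₀ : Fin n → Fin (N+1) := fun i => ⟨sd ⇑d i, Nat.lt_succ_of_le (hbound i)⟩ with hμ₀
    have hdec : (fun i => ((μ₀ i : ℕ))) = sd ⇑d := rfl
    have hsd2 : coeff (Finsupp.equivFunOnFinite.symm (sd ⇑d)) Q ≠ 0 := by
      rw [F1]; exact hc
    have hμ₀F : μ₀ ∈ (Finset.univ : Finset (Fin n → Fin (N + 1))).filter
        (fun μ => Antitone (fun i => (μ i : ℕ)) ∧
          (∑ i : Fin n, (μ i : ℕ)) = N ∧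
          ∀ k : Fin n, ∑ i ∈ Finset.univ.filter (· ≤ k), (μ i : ℕ)
            ≤ ∑ i ∈ Finset.univ.filter (· ≤ k), conjP ν (i : ℕ)) := by
      rw [Finset.mem_filter]
      refine ⟨mem_univ _, hdec ▸ antitone_sd (⇑d), ?_, ?_⟩
      · show (∑ i : Fin n, sd ⇑d i) = N
        rw [show (∑ i : Fin n, sd ⇑d i) = ∑ i : Fin n, d (sdP ⇑d i) from rfl,
          Equiv.sum_comp (sdP ⇑d) (fun i => d i)]
        exact htot
      · intro k
        have hsup2 : Finsupp.equivFunOnFinite.symm (sd ⇑d) ∈ Q.support :=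
          mem_support_iff.mpr hsd2
        have h2 := support_bound ν _ hsup2 (univ.filter (· ≤ k))
        rw [card_filter_le n k] at h2
        calc ∑ i ∈ Finset.univ.filter (· ≤ k), ((μ₀ i : ℕ))
            = ∑ i ∈ Finset.univ.filter (· ≤ k), (Finsupp.equivFunOnFinite.symm (sd ⇑d)) i :=
              Finset.sum_congr rfl fun i _ =>
                (congrFun (Finsupp.coe_equivFunOnFinite_symm (sd ⇑d)) i).symm
          _ ≤ ∑ j, min (ν j) ((k : ℕ) + 1) := h2
          _ = ∑ i ∈ Finset.univ.filter (· ≤ k), conjP ν (i : ℕ) :=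
              (conj_partial_sum ν hν1 k).symm
    rw [Finset.sum_eq_single μ₀ ?_ (fun h => absurd hμ₀F h)]
    · rw [coeff_smul, coeff_msymP _ (hdec ▸ antitone_sd (⇑d)) d, if_pos hdec.symm,
        smul_eq_mul, mul_one]
      show (((coeff d Q : ℕ)) : ℤ) = (((coeff (Finsupp.equivFunOnFinite.symm (fun i => ((μ₀ i : ℕ)))) Q : ℕ)) : ℤ)
      rw [hdec, F1]
    · intro b hbF hbne
      have hant : Antitone (fun i => ((b i : ℕ))) := (Finset.mem_filter.mp hbF).2.1
      rw [coeff_smul, coeff_msymP _ hant d, smul_eq_mul]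
      by_cases h : sd ⇑d = fun i => ((b i : ℕ))
      · exfalso
        apply hbne
        funext i
        exact Fin.ext ((congrFun h i).symm)
      · rw [if_neg h, mul_zero]
end
end

section
/- Fix integers n ≥ 1, q ≥ 2, 1 ≤ k ≤ q-2, 0 ≤ m ≤ n, and a ≥ 0. Let ρ_i = n - i. The number of pairs (λ, (i_1 < ... < i_m)) with λ = (λ_1 ≥ ... ≥ λ_n) ∈ ℤ^n dominant and 1 ≤ i_1 < ... < i_m ≤ n satisfying: (q-1)Σρ_i + (q-1)Σλ_i - nk - m = a; (q-1)ρ_i + (q-1)λ_i - k ≥ 0 for i ∉ {i_1,...,i_m} and ≥ 1 for i ∈ {i_1,...,i_m}; (q-1)ρ_i + qλ_i ≤ λ_{i-1} + k for 2 ≤ i ≤ n with i ∉ {i_1,...,i_m} and (q-1)ρ_i + qλ_i - 1 ≤ λ_{i-1} + k for i ∈ {i_1,...,i_m}, equals the coefficient of t^a in t^{-n+(q-k)(q^n-1)/(q-1)} · e_m(t^{-1}, t^{-q}, ..., t^{-q^{n-1}}) / ∏_{i=1}^n (1 - t^{q^i - 1}). -/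
open Finset PowerSeries

/-- The number of pairs `(λ, S)` in Statement 2: `λ = (λ_1 ≥ … ≥ λ_n) ∈ ℤ^n` dominant
(indexed here by `Fin n`, `0`-based, with `ρ_i = n - 1 - i`), and
`S = {i_1 < ⋯ < i_m} ⊆ {1, …, n}` a subset of cardinality `m`, subject to:
* `(q-1) ∑ ρ_i + (q-1) ∑ λ_i - nk - m = a`;
* `(q-1)ρ_i + (q-1)λ_i - k ≥ [i ∈ S]` for all `i`;
* `(q-1)ρ_i + qλ_i - [i ∈ S] ≤ λ_{i-1} + k` for all `i ≥ 2` (0-based: `i ≥ 1`). -/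
noncomputable def stmt2Count (n q k m a : ℕ) : ℕ :=
  Nat.card {x : (Fin n → ℤ) × Finset (Fin n) //
    Antitone x.1 ∧ x.2.card = m ∧
    ((q : ℤ) - 1) * (∑ i : Fin n, ((n : ℤ) - 1 - (i : ℕ)))
        + ((q : ℤ) - 1) * (∑ i : Fin n, x.1 i) - n * k - m = a ∧
    (∀ i : Fin n,
      (if i ∈ x.2 then (1 : ℤ) else 0) ≤
        ((q : ℤ) - 1) * ((n : ℤ) - 1 - (i : ℕ)) + ((q : ℤ) - 1) * x.1 i - k) ∧
    (∀ i : Fin n, 0 < (i : ℕ) →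
      ((q : ℤ) - 1) * ((n : ℤ) - 1 - (i : ℕ)) + q * x.1 i - (if i ∈ x.2 then (1 : ℤ) else 0)
        ≤ x.1 ⟨(i : ℕ) - 1, by omega⟩ + k)}

namespace Stmt2

lemma geom_mul (w : ℕ) (hw : 1 ≤ w) :
    (PowerSeries.mk fun a => if w ∣ a then (1:ℤ) else 0) * (1 - (X : PowerSeries ℤ) ^ w) = 1 := by
  rw [mul_sub, mul_one]
  ext a
  simp only [map_sub, coeff_mk, PowerSeries.coeff_mul_X_pow', coeff_one]
  rcases eq_or_ne a 0 with rfl | ha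
  · simp [Nat.dvd_zero, show ¬ w ≤ 0 by omega]
  · rw [if_neg ha]
    by_cases hd : w ∣ a
    · have hwa : w ≤ a := Nat.le_of_dvd (Nat.pos_of_ne_zero ha) hd
      have h2 : w ∣ a - w := Nat.dvd_sub hd dvd_rfl
      rw [if_pos hd, if_pos hwa, if_pos h2]; ring
    · rw [if_neg hd]
      by_cases hwa : w ≤ a
      · have h2 : ¬ w ∣ a - w := fun h => hd (by
          have := Nat.dvd_add h (dvd_refl w)
          rwa [Nat.sub_add_cancel hwa] at this)
        rw [if_pos hwa, if_neg h2]; ring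
      · rw [if_neg hwa]; ring

noncomputable def cnt (w : ℕ → ℕ) (N a : ℕ) : ℕ :=
  Nat.card {f : Fin N → ℕ // ∑ j, f j * w (j : ℕ) = a}

lemma finite_aux (w : ℕ → ℕ) (hw : ∀ j, 1 ≤ w j) (N a c : ℕ) :
    Finite {f : Fin N → ℕ // c + ∑ j, f j * w (j : ℕ) = a} := by
  have hb : ∀ (f : {f : Fin N → ℕ // c + ∑ j, f j * w (j:ℕ) = a}) (j : Fin N), f.1 j < a + 1 := by
    intro f j
    have h1 : f.1 j * w (j:ℕ) ≤ ∑ j, f.1 j * w (j:ℕ) :=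
      Finset.single_le_sum (f := fun j => f.1 j * w (j:ℕ)) (fun i _ => Nat.zero_le _)
        (Finset.mem_univ j)
    have h2 : f.1 j ≤ f.1 j * w (j:ℕ) := Nat.le_mul_of_pos_right _ (hw (j:ℕ))
    have := f.2
    omega
  apply Finite.of_injective
    (fun f => (fun j => (⟨f.1 j, hb f j⟩ : Fin (a+1)) : Fin N → Fin (a+1)))
  intro f g hfg
  apply Subtype.ext; funext j
  have := congrFun hfg j
  simpa using this

lemma finite_aux' (w : ℕ → ℕ) (hw : ∀ j, 1 ≤ w j) (N a : ℕ) :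
    Finite {f : Fin N → ℕ // ∑ j, f j * w (j : ℕ) = a} := by
  have := finite_aux w hw N a 0
  refine Finite.of_injective (fun f => (⟨f.1, by simpa using f.2⟩ :
    {f : Fin N → ℕ // 0 + ∑ j, f j * w (j : ℕ) = a})) ?_
  intro f g h
  have := congrArg Subtype.val h
  exact Subtype.ext this

lemma ncard_sigma {α : Type*} (s : Finset α) (β : α → Type*) [h : ∀ x, Finite (β x)] :
    Nat.card (Σ x : ↥s, β x) = ∑ x ∈ s, Nat.card (β x) := by
  letI : ∀ x : ↥s, Fintype (β x) := fun x => Fintype.ofFinite _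
  rw [Nat.card_eq_fintype_card, Fintype.card_sigma,
    ← Finset.sum_coe_sort s (fun x => Nat.card (β x))]
  exact Finset.sum_congr rfl fun x _ => (Nat.card_eq_fintype_card).symm

lemma card_mul_eq (w b : ℕ) (hw : 1 ≤ w) :
    Nat.card {e : ℕ // e * w = b} = if w ∣ b then 1 else 0 := by
  split_ifs with h
  · obtain ⟨c, rfl⟩ := h
    haveI : Unique {e : ℕ // e * w = w * c} := by
      refine ⟨⟨⟨c, mul_comm c w⟩⟩, ?_⟩
      rintro ⟨e, he⟩
      apply Subtype.ext
      simp only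
      have : e * w = c * w := by rw [he, mul_comm]
      exact Nat.eq_of_mul_eq_mul_right hw this
    exact Nat.card_unique
  · haveI : IsEmpty {e : ℕ // e * w = b} := by
      exact ⟨fun f => h ⟨f.1, by rw [mul_comm]; exact f.2.symm⟩⟩
    exact Nat.card_of_isEmpty


lemma cnt_succ (w : ℕ → ℕ) (hw : ∀ j, 1 ≤ w j) (N a : ℕ) :
    cnt w (N+1) a
      = ∑ p ∈ Finset.HasAntidiagonal.antidiagonal a,
          (if w 0 ∣ p.1 then 1 else 0) * cnt (fun j => w (j+1)) N p.2 := by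
  have e : {f : Fin (N+1) → ℕ // ∑ j, f j * w (j:ℕ) = a}
      ≃ Σ p : ↥(Finset.HasAntidiagonal.antidiagonal a),
          {e : ℕ // e * w 0 = p.1.1} ×
            {g : Fin N → ℕ // ∑ j, g j * w ((j:ℕ)+1) = p.1.2} := by
    refine ⟨fun f => ⟨⟨(f.1 0 * w 0, ∑ j : Fin N, f.1 j.succ * w ((j:ℕ)+1)), ?_⟩,
        ⟨f.1 0, rfl⟩, ⟨fun j => f.1 j.succ, rfl⟩⟩,
      fun x => ⟨fun i => if h : (i:ℕ) = 0 then x.2.1.1 else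
          x.2.2.1 ⟨(i:ℕ)-1, by omega⟩, ?_⟩, ?_, ?_⟩
    · rw [Finset.HasAntidiagonal.mem_antidiagonal]
      have h2 := f.2
      rw [Fin.sum_univ_succ] at h2
      simpa [Fin.val_succ] using h2
    · obtain ⟨⟨p, hp⟩, ⟨e, he⟩, ⟨g, hg⟩⟩ := x
      rw [Fin.sum_univ_succ]
      have h1 : ∀ j : Fin N,
          (if h : ((j.succ : Fin (N+1)):ℕ) = 0 then e
            else g ⟨((j.succ : Fin (N+1)):ℕ)-1, by omega⟩) * w ((j.succ : Fin (N+1)):ℕ)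
          = g j * w ((j:ℕ)+1) := fun j => rfl
      have h0 : (if h : ((0 : Fin (N+1)):ℕ) = 0 then e
            else g ⟨((0 : Fin (N+1)):ℕ)-1, by omega⟩) * w ((0 : Fin (N+1)):ℕ)
          = e * w 0 := rfl
      rw [Finset.sum_congr rfl fun j _ => h1 j, h0, he, hg]
      exact Finset.HasAntidiagonal.mem_antidiagonal.mp hp
    · intro f
      apply Subtype.ext
      funext i
      by_cases h : (i:ℕ) = 0
      · simp only [dif_pos h]
        exact congrArg f.1 (Fin.ext h.symm)
      · simp only [dif_neg h]
        refine congrArg f.1 (Fin.ext ?_)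
        simp [Fin.val_succ]
        omega
    · intro x
      obtain ⟨⟨p, hp⟩, ⟨e, he⟩, ⟨g, hg⟩⟩ := x
      have hp2 : p = (e * w 0, ∑ j : Fin N, g j * w ((j:ℕ)+1)) := by
        rw [he, hg]
      subst hp2
      rfl
  have key := ncard_sigma (Finset.HasAntidiagonal.antidiagonal a)
      (fun p => {e : ℕ // e * w 0 = p.1} ×
        {g : Fin N → ℕ // ∑ j, g j * w ((j:ℕ)+1) = p.2})
      (h := fun p => by
        haveI := finite_aux' (fun j => w (j+1)) (fun j => hw _) N p.2
        haveI : Finite {e : ℕ // e * w 0 = p.1} := by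
          apply Finite.of_injective (fun x : {e : ℕ // e * w 0 = p.1} =>
            (⟨x.1, by
              have h1 := x.2
              have h2 := Nat.le_mul_of_pos_right x.1 (hw 0)
              omega⟩ : Fin (p.1+1)))
          intro x y hxy
          apply Subtype.ext
          simpa using hxy
        infer_instance)
  rw [cnt, Nat.card_congr e, key]
  refine Finset.sum_congr rfl fun p hp => ?_
  rw [Nat.card_prod, card_mul_eq _ _ (hw 0)]
  rfl

lemma mk_cnt_mul : ∀ (N : ℕ) (w : ℕ → ℕ), (∀ j, 1 ≤ w j) →
    (PowerSeries.mk fun a => (cnt w N a : ℤ))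
        * ∏ j ∈ range N, (1 - (X : PowerSeries ℤ) ^ w j) = 1 := by
  intro N
  induction N with
  | zero =>
    intro w hw
    rw [Finset.range_zero, Finset.prod_empty, mul_one]
    ext a
    rw [coeff_mk, coeff_one]
    have : cnt w 0 a = if a = 0 then 1 else 0 := by
      rcases eq_or_ne a 0 with rfl | ha
      · rw [if_pos rfl, cnt]
        haveI : Unique {f : Fin 0 → ℕ // ∑ j, f j * w (j:ℕ) = 0} :=
          ⟨⟨⟨fun j => j.elim0, by simp⟩⟩, fun x => Subtype.ext (funext fun j => j.elim0)⟩
        exact Nat.card_unique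
      · rw [if_neg ha, cnt]
        haveI : IsEmpty {f : Fin 0 → ℕ // ∑ j, f j * w (j:ℕ) = a} :=
          ⟨fun f => ha (by rw [← f.2]; simp)⟩
        exact Nat.card_of_isEmpty
    rw [this]
    split_ifs <;> simp
  | succ N ih =>
    intro w hw
    have h1 : (PowerSeries.mk fun a => (cnt w (N+1) a : ℤ))
        = (PowerSeries.mk fun a => if w 0 ∣ a then (1:ℤ) else 0)
          * (PowerSeries.mk fun a => (cnt (fun j => w (j+1)) N a : ℤ)) := by
      ext a
      rw [coeff_mk, PowerSeries.coeff_mul, cnt_succ w hw]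
      push_cast
      refine Finset.sum_congr rfl fun p _ => ?_
      rw [coeff_mk, coeff_mk]
    have h2 : ∏ j ∈ range (N+1), (1 - (X : PowerSeries ℤ) ^ w j)
        = (∏ j ∈ range N, (1 - (X : PowerSeries ℤ) ^ w (j+1)))
          * (1 - (X : PowerSeries ℤ) ^ w 0) := Finset.prod_range_succ' _ _
    rw [h1, h2]
    calc (PowerSeries.mk fun a => if w 0 ∣ a then (1:ℤ) else 0)
            * (PowerSeries.mk fun a => (cnt (fun j => w (j+1)) N a : ℤ))
            * ((∏ j ∈ range N, (1 - (X : PowerSeries ℤ) ^ w (j+1)))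
              * (1 - (X : PowerSeries ℤ) ^ w 0))
        = ((PowerSeries.mk fun a => (cnt (fun j => w (j+1)) N a : ℤ))
            * ∏ j ∈ range N, (1 - (X : PowerSeries ℤ) ^ w (j+1)))
          * ((PowerSeries.mk fun a => if w 0 ∣ a then (1:ℤ) else 0)
            * (1 - (X : PowerSeries ℤ) ^ w 0)) := by ring
      _ = 1 := by rw [ih _ (fun j => hw _), geom_mul _ (hw 0), one_mul]


lemma telescope (q : ℤ) (B : ℕ → ℤ) : ∀ M : ℕ,
    ∑ j ∈ range (M+1), B j
      = (∑ i ∈ range (M+1), q^i) * B M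
        + ∑ j ∈ range M, (∑ i ∈ range (j+1), q^i) * (B j - q * B (j+1)) := by
  intro M
  induction M with
  | zero => simp
  | succ M ih =>
    rw [Finset.sum_range_succ B (M+1), ih,
      Finset.sum_range_succ (fun j => (∑ i ∈ range (j+1), q^i) * (B j - q * B (j+1))) M]
    have h1 : ∑ i ∈ range (M+2), q^i = q * ∑ i ∈ range (M+1), q^i + 1 := by
      rw [geom_sum_succ]
    rw [h1]
    ring

lemma abel_sum (q : ℤ) (χ : ℕ → ℤ) : ∀ M : ℕ,
    ∑ j ∈ range M, (∑ i ∈ range (j+1), q^i) * (χ (j+1) - χ j)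
      = (∑ i ∈ range M, q^i) * χ M - ∑ j ∈ range M, q^j * χ j := by
  intro M
  induction M with
  | zero => simp
  | succ M ih =>
    rw [Finset.sum_range_succ (fun j => (∑ i ∈ range (j+1), q^i) * (χ (j+1) - χ j)) M, ih,
      Finset.sum_range_succ (fun j => q^j * χ j) M,
      Finset.sum_range_succ (fun i => q^i) M]
    ring


/-! ### The combinatorial setup -/

def chi (n : ℕ) (S : Finset (Fin n)) (j : ℕ) : ℤ :=
  if h : j < n then (if (⟨j, h⟩ : Fin n) ∈ S then 1 else 0) else 0

def Fz (n : ℕ) (f : Fin n → ℕ) (j : ℕ) : ℤ :=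
  if h : j < n then (f ⟨j, h⟩ : ℤ) else 0

def gseq (n q k : ℕ) (S : Finset (Fin n)) (f : Fin n → ℕ) : ℕ → ℤ
  | 0 => 1 + Fz n f (n-1)
  | (i+1) => Fz n f (n-2-i) - (k:ℤ) - chi n S (n-1-i) + ((q:ℤ)-1) * (i:ℤ)
      + (q:ℤ) * gseq n q k S f i

def lam (n q k : ℕ) (S : Finset (Fin n)) (f : Fin n → ℕ) : Fin n → ℤ :=
  fun j => gseq n q k S f (n-1-(j:ℕ))

def Bl (n q k : ℕ) (S : Finset (Fin n)) (l : Fin n → ℤ) (j : ℕ) : ℤ :=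
  if h : j < n then
    ((q:ℤ)-1)*((n:ℤ)-1-(j:ℕ)) + ((q:ℤ)-1) * l ⟨j,h⟩ - (k:ℤ) - chi n S j
  else 0

lemma lam_rel1 (n q k : ℕ) (hn : 0 < n) (S : Finset (Fin n)) (f : Fin n → ℕ) :
    lam n q k S f ⟨n-1, by omega⟩ = 1 + Fz n f (n-1) := by
  show gseq n q k S f (n-1-(n-1)) = _
  rw [Nat.sub_self]
  rfl

lemma lam_rel2 (n q k : ℕ) (S : Finset (Fin n)) (f : Fin n → ℕ)
    (j : ℕ) (hj : j < n) (hj1 : j+1 < n) :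
    lam n q k S f ⟨j, hj⟩ = Fz n f j - (k:ℤ) - chi n S (j+1)
      + ((q:ℤ)-1)*((n:ℤ)-2-(j:ℕ)) + (q:ℤ) * lam n q k S f ⟨j+1, hj1⟩ := by
  show gseq n q k S f (n-1-j) = _
  have h1 : n-1-j = (n-2-j)+1 := by omega
  rw [h1]
  show Fz n f (n-2-(n-2-j)) - (k:ℤ) - chi n S (n-1-(n-2-j)) + ((q:ℤ)-1) * ((n-2-j : ℕ):ℤ)
      + (q:ℤ) * gseq n q k S f (n-2-j) = _
  rw [show n-2-(n-2-j) = j from by omega, show n-1-(n-2-j) = j+1 from by omega,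
    show ((n-2-j : ℕ):ℤ) = (n:ℤ)-2-(j:ℕ) from by omega,
    show n-2-j = n-1-(j+1) from by omega]
  rfl

lemma rel_unique (n : ℕ) (hn : 0 < n) (q : ℤ) (l l' : Fin n → ℤ)
    (h1 : l ⟨n-1, by omega⟩ = l' ⟨n-1, by omega⟩)
    (h2 : ∀ (j : ℕ) (hj : j < n) (hj1 : j+1 < n),
      l ⟨j, hj⟩ - q * l ⟨j+1, hj1⟩ = l' ⟨j, hj⟩ - q * l' ⟨j+1, hj1⟩) :
    l = l' := by
  have key : ∀ i (j : ℕ) (hj : j < n), n-1-j = i → l ⟨j,hj⟩ = l' ⟨j,hj⟩ := by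
    intro i
    induction i with
    | zero =>
      intro j hj hij
      have hjn : j = n-1 := by omega
      subst hjn
      exact h1
    | succ i ih =>
      intro j hj hij
      have hj1 : j+1 < n := by omega
      have e2 := h2 j hj hj1
      have e3 := ih (j+1) hj1 (by omega)
      rw [e3] at e2
      linarith
  funext j
  obtain ⟨jv, hj⟩ := j
  exact key (n-1-jv) jv hj rfl

lemma Fz_nonneg (n : ℕ) (f : Fin n → ℕ) (j : ℕ) : 0 ≤ Fz n f j := by
  unfold Fz; split
  · exact Int.natCast_nonneg _
  · exact le_refl 0

lemma chi_bounds (n : ℕ) (S : Finset (Fin n)) (j : ℕ) :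
    0 ≤ chi n S j ∧ chi n S j ≤ 1 := by
  unfold chi
  by_cases h : j < n
  · rw [dif_pos h]; split <;> norm_num
  · rw [dif_neg h]; norm_num

lemma B_nonneg (n q k : ℕ) (hq : 2 ≤ q) (hk1 : 1 ≤ k) (hk2 : k ≤ q - 2)
    (S : Finset (Fin n)) (f : Fin n → ℕ) (l : Fin n → ℤ) (hn : 0 < n)
    (h1 : l ⟨n-1, by omega⟩ = 1 + Fz n f (n-1))
    (h2 : ∀ (j : ℕ) (hj : j < n) (hj1 : j+1 < n),
      l ⟨j, hj⟩ = Fz n f j - (k:ℤ) - chi n S (j+1)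
        + ((q:ℤ)-1)*((n:ℤ)-2-(j:ℕ)) + (q:ℤ) * l ⟨j+1, hj1⟩) :
    ∀ j, 0 ≤ Bl n q k S l j := by
  have hq' : (2:ℤ) ≤ (q:ℤ) := by exact_mod_cast hq
  have hk1' : (1:ℤ) ≤ (k:ℤ) := by exact_mod_cast hk1
  have hk2' : (k:ℤ) ≤ (q:ℤ) - 2 := by omega
  have key : ∀ i (j : ℕ) (hj : j < n), n-1-j = i → 0 ≤ Bl n q k S l j := by
    intro i
    induction i with
    | zero =>
      intro j hj hij
      have hjn : j = n-1 := by omega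
      subst hjn
      unfold Bl
      rw [dif_pos hj]
      have h1' : l ⟨n-1, hj⟩ = 1 + Fz n f (n-1) := h1
      rw [h1']
      have hrho : ((n:ℤ)-1-((n-1:ℕ):ℤ)) = 0 := by omega
      rw [hrho]
      have hF := Fz_nonneg n f (n-1)
      have hχ := chi_bounds n S (n-1)
      have hmul := mul_nonneg (by linarith : (0:ℤ) ≤ (q:ℤ)-1) hF
      nlinarith [hχ.1, hχ.2]
    | succ i ih =>
      intro j hj hij
      have hj1 : j+1 < n := by omega
      have ihB := ih (j+1) hj1 (by omega)
      have e2 := h2 j hj hj1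
      have hrec : Bl n q k S l j = (q:ℤ) * Bl n q k S l (j+1)
          + ((q:ℤ)-1) * Fz n f j + ((q:ℤ)-1) + chi n S (j+1) - chi n S j := by
        unfold Bl
        rw [dif_pos hj, dif_pos hj1, e2]
        push_cast
        ring
      rw [hrec]
      have hF := Fz_nonneg n f j
      have hχ1 := chi_bounds n S (j+1)
      have hχ2 := chi_bounds n S j
      have hm1 := mul_nonneg (by linarith : (0:ℤ) ≤ (q:ℤ)) ihB
      have hm2 := mul_nonneg (by linarith : (0:ℤ) ≤ (q:ℤ)-1) hF
      linarith [hχ1.1, hχ2.2]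
  intro j
  by_cases hj : j < n
  · exact key (n-1-j) j hj rfl
  · unfold Bl
    rw [dif_neg hj]


lemma weight (q k M : ℕ) (S : Finset (Fin (M+1))) (f : Fin (M+1) → ℕ) (l : Fin (M+1) → ℤ)
    (h1 : l ⟨M, by omega⟩ = 1 + Fz (M+1) f M)
    (h2 : ∀ (j : ℕ) (hj : j < M+1) (hj1 : j+1 < M+1),
      l ⟨j, hj⟩ = Fz (M+1) f j - (k:ℤ) - chi (M+1) S (j+1)
        + ((q:ℤ)-1)*(((M+1:ℕ):ℤ)-2-(j:ℕ)) + (q:ℤ) * l ⟨j+1, hj1⟩) :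
    ∑ j ∈ range (M+1), Bl (M+1) q k S l j
      = ((q:ℤ) - (k:ℤ)) * (∑ i ∈ range (M+1), (q:ℤ)^i) - ((M+1:ℕ):ℤ)
          - (∑ j ∈ range (M+1), (q:ℤ)^j * chi (M+1) S j)
          + ∑ j ∈ range (M+1), Fz (M+1) f j * ((q:ℤ)^(j+1) - 1) := by
  have hBM : Bl (M+1) q k S l M
      = ((q:ℤ)-1)*(1 + Fz (M+1) f M) - (k:ℤ) - chi (M+1) S M := by
    unfold Bl
    rw [dif_pos (by omega : M < M+1)]
    have h1' : l ⟨M, (by omega : M < M+1)⟩ = 1 + Fz (M+1) f M := h1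
    rw [h1']
    push_cast
    ring
  have hstep : ∀ j ∈ range M,
      Bl (M+1) q k S l j - (q:ℤ) * Bl (M+1) q k S l (j+1)
        = ((q:ℤ)-1) * Fz (M+1) f j + ((q:ℤ)-1)
            + chi (M+1) S (j+1) - chi (M+1) S j := by
    intro j hj
    have hjM : j < M := mem_range.mp hj
    have e2 := h2 j (by omega) (by omega)
    unfold Bl
    rw [dif_pos (by omega : j < M+1), dif_pos (by omega : j+1 < M+1), e2]
    push_cast
    ring
  have hsplit : ∀ j ∈ range M,
      (∑ i ∈ range (j+1), (q:ℤ)^i) * (((q:ℤ)-1) * Fz (M+1) f j + ((q:ℤ)-1)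
          + chi (M+1) S (j+1) - chi (M+1) S j)
        = (((q:ℤ)^(j+1) - 1) * Fz (M+1) f j + ((q:ℤ)^(j+1) - 1))
            + (∑ i ∈ range (j+1), (q:ℤ)^i) * (chi (M+1) S (j+1) - chi (M+1) S j) := by
    intro j hj
    have hg := geom_sum_mul (q:ℤ) (j+1)
    linear_combination (Fz (M+1) f j + 1) * hg
  have hs1 : ∑ j ∈ range M, (∑ i ∈ range (j+1), (q:ℤ)^i)
        * (Bl (M+1) q k S l j - (q:ℤ) * Bl (M+1) q k S l (j+1))
      = ∑ j ∈ range M, (∑ i ∈ range (j+1), (q:ℤ)^i)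
        * (((q:ℤ)-1) * Fz (M+1) f j + ((q:ℤ)-1)
            + chi (M+1) S (j+1) - chi (M+1) S j) :=
    Finset.sum_congr rfl (fun j hj => by rw [hstep j hj])
  have hs2 : ∑ j ∈ range M, (∑ i ∈ range (j+1), (q:ℤ)^i)
        * (((q:ℤ)-1) * Fz (M+1) f j + ((q:ℤ)-1)
            + chi (M+1) S (j+1) - chi (M+1) S j)
      = ∑ j ∈ range M, ((((q:ℤ)^(j+1) - 1) * Fz (M+1) f j + ((q:ℤ)^(j+1) - 1))
            + (∑ i ∈ range (j+1), (q:ℤ)^i) * (chi (M+1) S (j+1) - chi (M+1) S j)) :=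
    Finset.sum_congr rfl hsplit
  rw [telescope (q:ℤ) (Bl (M+1) q k S l) M, hBM, hs1, hs2,
    Finset.sum_add_distrib, Finset.sum_add_distrib,
    abel_sum (q:ℤ) (chi (M+1) S) M]
  have hcomm : ∑ j ∈ range M, ((q:ℤ)^(j+1) - 1) * Fz (M+1) f j
      = ∑ j ∈ range M, Fz (M+1) f j * ((q:ℤ)^(j+1) - 1) :=
    Finset.sum_congr rfl fun j _ => mul_comm _ _
  have hconst : ∑ j ∈ range M, ((q:ℤ)^(j+1) - 1)
      = (q:ℤ) * (∑ i ∈ range M, (q:ℤ)^i) - (M:ℤ) := by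
    rw [Finset.sum_sub_distrib, Finset.mul_sum]
    simp [pow_succ']
  rw [hcomm, hconst,
    Finset.sum_range_succ (fun j => (q:ℤ)^j * chi (M+1) S j) M,
    Finset.sum_range_succ (fun j => Fz (M+1) f j * ((q:ℤ)^(j+1) - 1)) M,
    Finset.sum_range_succ (fun i => (q:ℤ)^i) M]
  push_cast
  linear_combination (1 + Fz (M+1) f M) * (geom_sum_mul (q:ℤ) M)

lemma chi_sum (n q : ℕ) (S : Finset (Fin n)) :
    ∑ j ∈ range n, (q:ℤ)^j * chi n S j = ∑ i ∈ S, (q:ℤ)^(i:ℕ) := by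
  rw [← Fin.sum_univ_eq_sum_range (fun j => (q:ℤ)^j * chi n S j) n]
  have h : ∀ i : Fin n, (q:ℤ)^(i:ℕ) * chi n S (i:ℕ)
      = if i ∈ S then (q:ℤ)^(i:ℕ) else 0 := by
    intro i
    unfold chi
    rw [dif_pos i.isLt, Fin.eta]
    split <;> ring
  rw [Finset.sum_congr rfl fun i _ => h i, Finset.sum_ite_mem, Finset.univ_inter]

lemma chi_card (n : ℕ) (S : Finset (Fin n)) :
    ∑ i : Fin n, (if i ∈ S then (1:ℤ) else 0) = (S.card : ℤ) := by
  rw [Finset.sum_ite_mem, Finset.univ_inter, Finset.sum_const, nsmul_eq_mul, mul_one]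

lemma Fz_sum (n q : ℕ) (f : Fin n → ℕ) :
    ∑ j ∈ range n, Fz n f j * ((q:ℤ)^(j+1) - 1)
      = ∑ j : Fin n, (f j : ℤ) * ((q:ℤ)^((j:ℕ)+1) - 1) := by
  rw [← Fin.sum_univ_eq_sum_range (fun j => Fz n f j * ((q:ℤ)^(j+1) - 1)) n]
  refine Finset.sum_congr rfl fun i _ => ?_
  unfold Fz
  rw [dif_pos i.isLt, Fin.eta]


def eZ (n q k : ℕ) (S : Finset (Fin n)) : ℤ :=
  ((q:ℤ) - (k:ℤ)) * (∑ i ∈ range n, (q:ℤ)^i) - (n:ℤ) - ∑ i ∈ S, (q:ℤ)^(i:ℕ)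

def EN (n q k : ℕ) (S : Finset (Fin n)) : ℕ :=
  (q - k) * (∑ i ∈ range n, q ^ i) - n - ∑ i ∈ S, q ^ (i:ℕ)

lemma qpow_one_le (q : ℕ) (hq : 2 ≤ q) (t : ℕ) : (1:ℤ) ≤ (q:ℤ)^t := by
  have h := Nat.one_le_pow t q (by omega)
  have : ((1:ℕ):ℤ) ≤ ((q^t : ℕ):ℤ) := by exact_mod_cast h
  push_cast at this
  exact this

lemma EN_cast (n q k : ℕ) (hq : 2 ≤ q) (hk2 : k ≤ q - 2) (S : Finset (Fin n)) :
    (EN n q k S : ℤ) = eZ n q k S := by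
  have hP : n ≤ ∑ i ∈ range n, q^i := by
    calc n = ∑ _i ∈ range n, 1 := by simp
      _ ≤ ∑ i ∈ range n, q^i :=
        Finset.sum_le_sum fun i _ => Nat.one_le_pow _ _ (by omega)
  have hSb : ∑ i ∈ S, q^(i:ℕ) ≤ ∑ i ∈ range n, q^i := by
    have hm := Finset.sum_map S Fin.valEmbedding (fun i : ℕ => q^i)
    simp only [Fin.valEmbedding_apply] at hm
    rw [← hm]
    refine Finset.sum_le_sum_of_subset ?_
    intro x hx
    obtain ⟨i, _, rfl⟩ := Finset.mem_map.mp hx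
    exact Finset.mem_range.mpr i.isLt
  have h2 : n + ∑ i ∈ S, q^(i:ℕ) ≤ (q-k) * ∑ i ∈ range n, q^i := by
    have h3 : 2 * (∑ i ∈ range n, q^i) ≤ (q-k) * ∑ i ∈ range n, q^i :=
      Nat.mul_le_mul_right _ (by omega)
    omega
  unfold EN eZ
  rw [Nat.cast_sub (show ∑ i ∈ S, q^(i:ℕ) ≤ (q-k) * ∑ i ∈ range n, q^i - n by omega),
    Nat.cast_sub (show n ≤ (q-k) * ∑ i ∈ range n, q^i by omega),
    Nat.cast_mul, show ((q - k : ℕ) : ℤ) = (q:ℤ) - (k:ℤ) by omega]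
  push_cast
  ring

lemma Bl_apply (n q k : ℕ) (S : Finset (Fin n)) (l : Fin n → ℤ) (i : Fin n) :
    Bl n q k S l (i:ℕ)
      = ((q:ℤ)-1)*((n:ℤ)-1-(i:ℕ)) + ((q:ℤ)-1) * l i - (k:ℤ)
          - (if i ∈ S then (1:ℤ) else 0) := by
  unfold Bl chi
  rw [dif_pos i.isLt, dif_pos i.isLt]

lemma omega_sum (q k M : ℕ) (S : Finset (Fin (M+1))) (f : Fin (M+1) → ℕ) (l : Fin (M+1) → ℤ)
    (h1 : l ⟨M, by omega⟩ = 1 + Fz (M+1) f M)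
    (h2 : ∀ (j : ℕ) (hj : j < M+1) (hj1 : j+1 < M+1),
      l ⟨j, hj⟩ = Fz (M+1) f j - (k:ℤ) - chi (M+1) S (j+1)
        + ((q:ℤ)-1)*(((M+1:ℕ):ℤ)-2-(j:ℕ)) + (q:ℤ) * l ⟨j+1, hj1⟩) :
    ((q:ℤ) - 1) * (∑ i : Fin (M+1), (((M+1:ℕ):ℤ) - 1 - (i:ℕ)))
        + ((q:ℤ) - 1) * (∑ i : Fin (M+1), l i) - ((M+1:ℕ):ℤ) * (k:ℤ) - (S.card : ℤ)
      = eZ (M+1) q k S + ∑ j : Fin (M+1), (f j : ℤ) * ((q:ℤ)^((j:ℕ)+1) - 1) := by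
  have hsum : ∑ j ∈ range (M+1), Bl (M+1) q k S l j
      = ((q:ℤ) - 1) * (∑ i : Fin (M+1), (((M+1:ℕ):ℤ) - 1 - (i:ℕ)))
          + ((q:ℤ) - 1) * (∑ i : Fin (M+1), l i) - ((M+1:ℕ):ℤ) * (k:ℤ) - (S.card : ℤ) := by
    rw [← Fin.sum_univ_eq_sum_range (fun j => Bl (M+1) q k S l j) (M+1)]
    have hc : ∑ i : Fin (M+1), Bl (M+1) q k S l (i:ℕ)
        = ∑ i : Fin (M+1), (((q:ℤ)-1)*(((M+1:ℕ):ℤ)-1-(i:ℕ)) + ((q:ℤ)-1) * l i - (k:ℤ)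
            - (if i ∈ S then (1:ℤ) else 0)) :=
      Finset.sum_congr rfl fun i _ => Bl_apply (M+1) q k S l i
    rw [hc, Finset.sum_sub_distrib, Finset.sum_sub_distrib, Finset.sum_add_distrib,
      ← Finset.mul_sum, ← Finset.mul_sum, chi_card, Finset.sum_const, Finset.card_univ,
      Fintype.card_fin, nsmul_eq_mul]
    try push_cast
    try ring
  rw [← hsum, weight q k M S f l h1 h2, chi_sum (M+1) q S, Fz_sum (M+1) q f]
  unfold eZ
  ring

lemma antitone_of_step (n : ℕ) (l : Fin n → ℤ)
    (h : ∀ (j : ℕ) (hj : j < n) (hj1 : j+1 < n), l ⟨j+1, hj1⟩ ≤ l ⟨j, hj⟩) :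
    Antitone l := by
  have key : ∀ d (iv : ℕ) (hi : iv < n) (hj : iv + d < n), l ⟨iv + d, hj⟩ ≤ l ⟨iv, hi⟩ := by
    intro d
    induction d with
    | zero => intro iv hi hj; exact le_refl _
    | succ d ih =>
      intro iv hi hj
      have h1 := h (iv + d) (by omega) (by omega)
      have h2 := ih iv hi (by omega)
      exact le_trans h1 h2
  rintro ⟨iv, hi⟩ ⟨jv, hj⟩ hij
  have hij' : iv ≤ jv := hij
  have := key (jv - iv) iv hi (by omega)
  have e : (⟨iv + (jv - iv), by omega⟩ : Fin n) = ⟨jv, hj⟩ := Fin.ext (by simp; omega)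
  rwa [e] at this

lemma finite_T (n q k a : ℕ) (hq : 2 ≤ q) (S : Finset (Fin n)) :
    Finite {f : Fin n → ℕ //
      eZ n q k S + ∑ j : Fin n, (f j : ℤ) * ((q:ℤ)^((j:ℕ)+1) - 1) = (a:ℤ)} := by
  set c := ((a:ℤ) - eZ n q k S).toNat with hc
  have hb : ∀ (f : {f : Fin n → ℕ //
      eZ n q k S + ∑ j : Fin n, (f j : ℤ) * ((q:ℤ)^((j:ℕ)+1) - 1) = (a:ℤ)}) (j : Fin n),
      f.1 j < c + 1 := by
    intro f j
    have hterm : ∀ j' : Fin n, (0:ℤ) ≤ (f.1 j' : ℤ) * ((q:ℤ)^((j':ℕ)+1) - 1) := fun j' =>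
      mul_nonneg (Int.natCast_nonneg _) (by linarith [qpow_one_le q hq ((j':ℕ)+1)])
    have h1 : (f.1 j : ℤ) * ((q:ℤ)^((j:ℕ)+1) - 1)
        ≤ ∑ j' : Fin n, (f.1 j' : ℤ) * ((q:ℤ)^((j':ℕ)+1) - 1) :=
      Finset.single_le_sum (fun i _ => hterm i) (Finset.mem_univ j)
    have h2 : (f.1 j : ℤ) ≤ (f.1 j : ℤ) * ((q:ℤ)^((j:ℕ)+1) - 1) :=
      le_mul_of_one_le_right (Int.natCast_nonneg _)
        (by
          have h5 : (q:ℤ) ≤ (q:ℤ)^((j:ℕ)+1) := le_self_pow₀ (by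
            have : (2:ℤ) ≤ (q:ℤ) := by exact_mod_cast hq
            omega) (by omega)
          have h6 : (2:ℤ) ≤ (q:ℤ) := by exact_mod_cast hq
          linarith)
    have h3 := f.2
    omega
  apply Finite.of_injective
    (fun f => (fun j => (⟨f.1 j, hb f j⟩ : Fin (c+1)) : Fin n → Fin (c+1)))
  intro f g hfg
  apply Subtype.ext; funext j
  have := congrFun hfg j
  simpa using this

lemma card_T (n q k a : ℕ) (hq : 2 ≤ q) (hk2 : k ≤ q - 2) (S : Finset (Fin n)) :
    Nat.card {f : Fin n → ℕ //
        eZ n q k S + ∑ j : Fin n, (f j : ℤ) * ((q:ℤ)^((j:ℕ)+1) - 1) = (a:ℤ)}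
      = if EN n q k S ≤ a then cnt (fun j => q^(j+1) - 1) n (a - EN n q k S) else 0 := by
  have hcast := EN_cast n q k hq hk2 S
  have hwcast : ∀ j : Fin n, ((q^((j:ℕ)+1) - 1 : ℕ) : ℤ) = (q:ℤ)^((j:ℕ)+1) - 1 := by
    intro j
    have h1 : 1 ≤ q^((j:ℕ)+1) := Nat.one_le_pow _ _ (by omega)
    rw [Nat.cast_sub h1]
    push_cast
    ring
  have hs : ∀ f : Fin n → ℕ, ((∑ j : Fin n, f j * (q^((j:ℕ)+1) - 1) : ℕ) : ℤ)
      = ∑ j : Fin n, (f j : ℤ) * ((q:ℤ)^((j:ℕ)+1) - 1) := by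
    intro f
    rw [Nat.cast_sum]
    exact Finset.sum_congr rfl fun j _ => by rw [Nat.cast_mul, hwcast j]
  split_ifs with h
  · apply Nat.card_congr
    refine ⟨fun x => ⟨x.1, ?_⟩, fun x => ⟨x.1, ?_⟩, fun x => Subtype.ext rfl,
      fun x => Subtype.ext rfl⟩
    · have h1 := x.2
      have h2 := hs x.1
      show ∑ j : Fin n, x.1 j * (q^((j:ℕ)+1) - 1) = a - EN n q k S
      omega
    · have h1 : ∑ j : Fin n, x.1 j * (q^((j:ℕ)+1) - 1) = a - EN n q k S := x.2
      have h2 := hs x.1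
      omega
  · haveI : IsEmpty {f : Fin n → ℕ //
        eZ n q k S + ∑ j : Fin n, (f j : ℤ) * ((q:ℤ)^((j:ℕ)+1) - 1) = (a:ℤ)} := by
      refine ⟨fun f => ?_⟩
      have h1 := f.2
      have h2 := hs f.1
      omega
    exact Nat.card_of_isEmpty


lemma chi_fin (n : ℕ) (S : Finset (Fin n)) (i : Fin n) :
    chi n S (i:ℕ) = if i ∈ S then (1:ℤ) else 0 := by
  unfold chi
  rw [dif_pos i.isLt]

lemma phi_mem (q k M m a : ℕ) (hq : 2 ≤ q) (hk1 : 1 ≤ k) (hk2 : k ≤ q - 2)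
    (S : Finset (Fin (M+1))) (hS : S.card = m) (f : Fin (M+1) → ℕ)
    (hf : eZ (M+1) q k S + ∑ j : Fin (M+1), (f j : ℤ) * ((q:ℤ)^((j:ℕ)+1) - 1) = (a:ℤ)) :
    Antitone (lam (M+1) q k S f) ∧ S.card = m ∧
    ((q : ℤ) - 1) * (∑ i : Fin (M+1), (((M+1:ℕ):ℤ) - 1 - ((i:ℕ):ℤ)))
        + ((q : ℤ) - 1) * (∑ i : Fin (M+1), lam (M+1) q k S f i)
        - ((M+1:ℕ):ℤ) * (k:ℤ) - (m:ℤ) = (a:ℤ) ∧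
    (∀ i : Fin (M+1),
      (if i ∈ S then (1 : ℤ) else 0) ≤
        ((q : ℤ) - 1) * (((M+1:ℕ):ℤ) - 1 - ((i:ℕ):ℤ))
          + ((q : ℤ) - 1) * lam (M+1) q k S f i - (k:ℤ)) ∧
    (∀ i : Fin (M+1), 0 < (i : ℕ) →
      ((q : ℤ) - 1) * (((M+1:ℕ):ℤ) - 1 - ((i:ℕ):ℤ)) + (q:ℤ) * lam (M+1) q k S f i
          - (if i ∈ S then (1 : ℤ) else 0)
        ≤ lam (M+1) q k S f ⟨(i : ℕ) - 1, by omega⟩ + (k:ℤ)) := by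
  have hq' : (2:ℤ) ≤ (q:ℤ) := by exact_mod_cast hq
  have hk1' : (1:ℤ) ≤ (k:ℤ) := by exact_mod_cast hk1
  set l := lam (M+1) q k S f with hldef
  have hrel1 : l ⟨M, by omega⟩ = 1 + Fz (M+1) f M := lam_rel1 (M+1) q k (by omega) S f
  have hrel2 : ∀ (j : ℕ) (hj : j < M+1) (hj1 : j+1 < M+1),
      l ⟨j, hj⟩ = Fz (M+1) f j - (k:ℤ) - chi (M+1) S (j+1)
        + ((q:ℤ)-1)*(((M+1:ℕ):ℤ)-2-(j:ℕ)) + (q:ℤ) * l ⟨j+1, hj1⟩ :=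
    fun j hj hj1 => lam_rel2 (M+1) q k S f j hj hj1
  have hB := B_nonneg (M+1) q k hq hk1 hk2 S f l (by omega) hrel1 hrel2
  refine ⟨?_, hS, ?_, ?_, ?_⟩
  · apply antitone_of_step
    intro j hj hj1
    have e2 := hrel2 j hj hj1
    have hBj1 := hB (j+1)
    have hBeq : Bl (M+1) q k S l (j+1)
        = ((q:ℤ)-1)*(((M+1:ℕ):ℤ)-1-((j+1:ℕ):ℤ)) + ((q:ℤ)-1) * l ⟨j+1, hj1⟩
          - (k:ℤ) - chi (M+1) S (j+1) := by
      unfold Bl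
      rw [dif_pos hj1]
    rw [hBeq] at hBj1
    have hF := Fz_nonneg (M+1) f j
    have hpe : ((q:ℤ)-1)*(((M+1:ℕ):ℤ)-1-((j+1:ℕ):ℤ))
        = ((q:ℤ)-1)*(((M+1:ℕ):ℤ)-2-(j:ℕ)) := by push_cast; ring
    rw [hpe] at hBj1
    linarith
  · have hos := omega_sum q k M S f l hrel1 hrel2
    rw [hS] at hos
    exact hos.trans hf
  · intro i
    have hBi := hB (i:ℕ)
    rw [Bl_apply (M+1) q k S l i] at hBi
    linarith
  · intro i hi
    have hj1 : ((i:ℕ)-1)+1 < M+1 := by omega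
    have e2 := hrel2 ((i:ℕ)-1) (by omega) hj1
    have hie : (⟨((i:ℕ)-1)+1, hj1⟩ : Fin (M+1)) = i := Fin.ext (by simp; omega)
    rw [hie] at e2
    have hch : chi (M+1) S (((i:ℕ)-1)+1) = if i ∈ S then (1:ℤ) else 0 := by
      rw [show ((i:ℕ)-1)+1 = (i:ℕ) from by omega, chi_fin (M+1) S i]
    rw [hch] at e2
    have hF := Fz_nonneg (M+1) f ((i:ℕ)-1)
    have hpe : ((q:ℤ)-1)*(((M+1:ℕ):ℤ)-2-(((i:ℕ)-1:ℕ):ℤ))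
        = ((q:ℤ)-1)*(((M+1:ℕ):ℤ)-1-((i:ℕ):ℤ)) := by
      rw [show ((((i:ℕ)-1:ℕ)):ℤ) = ((i:ℕ):ℤ) - 1 from by omega]
      ring
    rw [hpe] at e2
    linarith

def fext (q k M : ℕ) (S : Finset (Fin (M+1))) (l : Fin (M+1) → ℤ) : Fin (M+1) → ℕ :=
  fun j => if h : (j:ℕ)+1 < M+1 then
      (l j + (k:ℤ) + chi (M+1) S ((j:ℕ)+1)
        - ((q:ℤ)-1)*(((M+1:ℕ):ℤ)-2-((j:ℕ):ℤ)) - (q:ℤ) * l ⟨(j:ℕ)+1, h⟩).toNat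
    else (l j - 1).toNat

lemma fext_last (q k M : ℕ) (S : Finset (Fin (M+1))) (l : Fin (M+1) → ℤ) (hM : M < M+1) :
    fext q k M S l ⟨M, hM⟩ = (l ⟨M, hM⟩ - 1).toNat := by
  unfold fext
  exact dif_neg (by omega : ¬ (M + 1 < M + 1))

lemma fext_lt (q k M : ℕ) (S : Finset (Fin (M+1))) (l : Fin (M+1) → ℤ)
    (j : ℕ) (hj : j < M+1) (hj1 : j+1 < M+1) :
    fext q k M S l ⟨j, hj⟩
      = (l ⟨j, hj⟩ + (k:ℤ) + chi (M+1) S (j+1)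
          - ((q:ℤ)-1)*(((M+1:ℕ):ℤ)-2-(j:ℤ)) - (q:ℤ) * l ⟨j+1, hj1⟩).toNat := by
  unfold fext
  exact dif_pos hj1


lemma count_eq (n q k m a : ℕ) (hn : 1 ≤ n) (hq : 2 ≤ q) (hk1 : 1 ≤ k) (hk2 : k ≤ q - 2) :
    stmt2Count n q k m a
      = ∑ S ∈ powersetCard m (univ : Finset (Fin n)),
          Nat.card {f : Fin n → ℕ //
            eZ n q k S + ∑ j : Fin n, (f j : ℤ) * ((q:ℤ)^((j:ℕ)+1) - 1) = (a:ℤ)} := by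
  classical
  obtain ⟨M, rfl⟩ : ∃ M, n = M+1 := ⟨n-1, by omega⟩
  have hq' : (2:ℤ) ≤ (q:ℤ) := by exact_mod_cast hq
  have hk1' : (1:ℤ) ≤ (k:ℤ) := by exact_mod_cast hk1
  haveI hfin : ∀ S : Finset (Fin (M+1)), Finite {f : Fin (M+1) → ℕ //
      eZ (M+1) q k S + ∑ j : Fin (M+1), (f j : ℤ) * ((q:ℤ)^((j:ℕ)+1) - 1) = (a:ℤ)} :=
    fun S => finite_T (M+1) q k a hq S
  rw [stmt2Count, ← ncard_sigma (powersetCard m (univ : Finset (Fin (M+1))))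
    (fun S => {f : Fin (M+1) → ℕ //
      eZ (M+1) q k S + ∑ j : Fin (M+1), (f j : ℤ) * ((q:ℤ)^((j:ℕ)+1) - 1) = (a:ℤ)})]
  refine Nat.card_congr (Equiv.ofBijective (fun x =>
    ⟨(lam (M+1) q k x.1.1 x.2.1, x.1.1),
      phi_mem q k M m a hq hk1 hk2 x.1.1
        (Finset.mem_powersetCard_univ.mp x.1.2) x.2.1 x.2.2⟩) ⟨?_, ?_⟩).symm
  · -- injectivity
    rintro ⟨⟨S, hSmem⟩, ⟨f, hf⟩⟩ ⟨⟨S', hSmem'⟩, ⟨f', hf'⟩⟩ h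
    have hval : (lam (M+1) q k S f, S) = (lam (M+1) q k S' f', S') :=
      congrArg Subtype.val h
    have hSS : S = S' := congrArg Prod.snd hval
    subst hSS
    have hlam : lam (M+1) q k S f = lam (M+1) q k S f' := congrArg Prod.fst hval
    have hff : f = f' := by
      funext j
      by_cases hj : (j:ℕ)+1 < M+1
      · have e1 := lam_rel2 (M+1) q k S f (j:ℕ) j.isLt hj
        have e2 := lam_rel2 (M+1) q k S f' (j:ℕ) j.isLt hj
        rw [hlam] at e1
        have hFz : Fz (M+1) f (j:ℕ) = Fz (M+1) f' (j:ℕ) := by linarith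
        have hfj : Fz (M+1) f (j:ℕ) = (f j : ℤ) := by
          unfold Fz
          rw [dif_pos j.isLt]
        have hfj' : Fz (M+1) f' (j:ℕ) = (f' j : ℤ) := by
          unfold Fz
          rw [dif_pos j.isLt]
        have : (f j : ℤ) = (f' j : ℤ) := by rw [← hfj, ← hfj', hFz]
        exact_mod_cast this
      · have hjM : (j:ℕ) = M := by omega
        have hp : M < M+1 := Nat.lt_succ_self M
        have e1 : lam (M+1) q k S f ⟨M, hp⟩ = 1 + Fz (M+1) f M :=
          lam_rel1 (M+1) q k (Nat.succ_pos M) S f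
        have e2 : lam (M+1) q k S f' ⟨M, hp⟩ = 1 + Fz (M+1) f' M :=
          lam_rel1 (M+1) q k (Nat.succ_pos M) S f'
        have e3 : lam (M+1) q k S f ⟨M, hp⟩ = lam (M+1) q k S f' ⟨M, hp⟩ := by
          rw [hlam]
        have hFz : Fz (M+1) f M = Fz (M+1) f' M := by linarith
        have hjeq : j = ⟨M, hp⟩ := Fin.ext (by simpa using hjM)
        rw [hjeq]
        have hfj : Fz (M+1) f M = (f ⟨M, hp⟩ : ℤ) := by
          unfold Fz
          rw [dif_pos hp]
        have hfj' : Fz (M+1) f' M = (f' ⟨M, hp⟩ : ℤ) := by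
          unfold Fz
          rw [dif_pos hp]
        have : (f ⟨M, hp⟩ : ℤ) = (f' ⟨M, hp⟩ : ℤ) := by rw [← hfj, ← hfj', hFz]
        exact_mod_cast this
    subst hff
    rfl
  · -- surjectivity
    rintro ⟨⟨l, S⟩, hl1, hl2, hl3, hl4, hl5⟩
    have hlM : 1 ≤ l ⟨M, by omega⟩ := by
      have h4 := hl4 ⟨M, by omega⟩
      have h4' : (if (⟨M, by omega⟩ : Fin (M+1)) ∈ S then (1:ℤ) else 0)
          ≤ ((q:ℤ)-1) * (((M+1:ℕ):ℤ) - 1 - ((M:ℕ):ℤ))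
            + ((q:ℤ)-1) * l ⟨M, by omega⟩ - (k:ℤ) := h4
      have hz : (((M+1:ℕ):ℤ) - 1 - ((M:ℕ):ℤ)) = 0 := by push_cast; ring
      rw [hz, mul_zero] at h4'
      have hite : (0:ℤ) ≤ if (⟨M, by omega⟩ : Fin (M+1)) ∈ S then (1:ℤ) else 0 := by
        split <;> norm_num
      by_contra hcon
      push_neg at hcon
      have hle : l ⟨M, by omega⟩ ≤ 0 := by omega
      have : ((q:ℤ)-1) * l ⟨M, by omega⟩ ≤ 0 :=
        mul_nonpos_of_nonneg_of_nonpos (by linarith) hle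
      linarith
    have hcpos : ∀ (j : ℕ) (hj : j < M+1) (hj1 : j+1 < M+1),
        0 ≤ l ⟨j, hj⟩ + (k:ℤ) + chi (M+1) S (j+1)
          - ((q:ℤ)-1)*(((M+1:ℕ):ℤ)-2-(j:ℤ)) - (q:ℤ) * l ⟨j+1, hj1⟩ := by
      intro j hj hj1
      have h5 := hl5 ⟨j+1, hj1⟩ (Nat.succ_pos j)
      have h5' : ((q:ℤ)-1) * (((M+1:ℕ):ℤ) - 1 - ((j+1:ℕ):ℤ)) + (q:ℤ) * l ⟨j+1, hj1⟩
          - (if (⟨j+1, hj1⟩ : Fin (M+1)) ∈ S then (1:ℤ) else 0) ≤ l ⟨j, hj⟩ + (k:ℤ) := h5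
      have hch : (if (⟨j+1, hj1⟩ : Fin (M+1)) ∈ S then (1:ℤ) else 0)
          = chi (M+1) S (j+1) := by
        unfold chi
        rw [dif_pos hj1]
      rw [hch] at h5'
      have hpe : ((q:ℤ)-1) * (((M+1:ℕ):ℤ) - 1 - ((j+1:ℕ):ℤ))
          = ((q:ℤ)-1)*(((M+1:ℕ):ℤ)-2-(j:ℤ)) := by push_cast; ring
      rw [hpe] at h5'
      linarith
    have hrel1 : l ⟨M, by omega⟩ = 1 + Fz (M+1) (fext q k M S l) M := by
      have h1 : Fz (M+1) (fext q k M S l) M = ((l ⟨M, by omega⟩ - 1).toNat : ℤ) := by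
        unfold Fz
        rw [dif_pos (by omega : M < M+1), fext_last q k M S l]
      rw [h1, Int.toNat_of_nonneg (by linarith)]
      ring
    have hrel2 : ∀ (j : ℕ) (hj : j < M+1) (hj1 : j+1 < M+1),
        l ⟨j, hj⟩ = Fz (M+1) (fext q k M S l) j - (k:ℤ) - chi (M+1) S (j+1)
          + ((q:ℤ)-1)*(((M+1:ℕ):ℤ)-2-(j:ℕ)) + (q:ℤ) * l ⟨j+1, hj1⟩ := by
      intro j hj hj1
      have h1 : Fz (M+1) (fext q k M S l) j
          = l ⟨j, hj⟩ + (k:ℤ) + chi (M+1) S (j+1)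
            - ((q:ℤ)-1)*(((M+1:ℕ):ℤ)-2-(j:ℤ)) - (q:ℤ) * l ⟨j+1, hj1⟩ := by
        unfold Fz
        rw [dif_pos hj, fext_lt q k M S l j hj hj1,
          Int.toNat_of_nonneg (hcpos j hj hj1)]
      rw [h1]
      ring
    have hlam : lam (M+1) q k S (fext q k M S l) = l := by
      apply rel_unique (M+1) (by omega) (q:ℤ)
      · exact (lam_rel1 (M+1) q k (by omega) S _).trans hrel1.symm
      · intro j hj hj1
        have e1 := lam_rel2 (M+1) q k S (fext q k M S l) j hj hj1
        have e2 := hrel2 j hj hj1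
        rw [e1, e2]
        ring
    refine ⟨⟨⟨S, Finset.mem_powersetCard_univ.mpr hl2⟩, ⟨fext q k M S l, ?_⟩⟩, ?_⟩
    · show eZ (M+1) q k S
          + ∑ j : Fin (M+1), ((fext q k M S l) j : ℤ) * ((q:ℤ)^((j:ℕ)+1) - 1) = (a:ℤ)
      have hos := omega_sum q k M S (fext q k M S l) l hrel1 hrel2
      rw [hl2] at hos
      rw [← hos]
      exact hl3
    · apply Subtype.ext
      show (lam (M+1) q k S (fext q k M S l), S) = (l, S)
      rw [hlam]

end Stmt2

/-- For `n ≥ 1`, `q ≥ 2`, `1 ≤ k ≤ q-2`, `0 ≤ m ≤ n`, the number of pairs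
`(λ, (i_1 < ⋯ < i_m))` as above equals the coefficient of `t^a` in
`t^{-n+(q-k)(q^n-1)/(q-1)} e_m(t^{-1}, t^{-q}, …, t^{-q^{n-1}}) / ∏_{i=1}^n (1 - t^{q^i-1})`.
This is formalized as the equivalent multiplied-through power series identity in `ℤ[[t]]`
(valid since all exponents `(q-k)(∑_{i<n} q^i) - n - ∑_{i∈S} q^i` are nonnegative and
`∏_{i=1}^n (1-t^{q^i-1})` is invertible):
`(∑_a N(a) t^a) ∏_{i=1}^n (1-t^{q^i-1})
   = ∑_{S ⊆ {0,…,n-1}, |S| = m} t^{(q-k)(∑_{i<n} q^i) - n - ∑_{i∈S} q^i}`. -/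
theorem stmt2 (n q k m : ℕ) (hn : 1 ≤ n) (hq : 2 ≤ q) (hk1 : 1 ≤ k) (hk2 : k ≤ q - 2)
    (hm : m ≤ n) :
    (PowerSeries.mk fun a : ℕ => (stmt2Count n q k m a : ℤ))
        * ∏ i ∈ range n, (1 - (PowerSeries.X : PowerSeries ℤ) ^ (q ^ (i + 1) - 1))
      = ∑ S ∈ powersetCard m (range n),
          (PowerSeries.X : PowerSeries ℤ) ^
            ((q - k) * (∑ i ∈ range n, q ^ i) - n - ∑ i ∈ S, q ^ i) := by
  classical
  have hw1 : ∀ j, 1 ≤ q^(j+1) - 1 := by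
    intro j
    have h1 : q ≤ q^(j+1) := Nat.le_self_pow (by omega) q
    omega
  have hrange : range n = (univ : Finset (Fin n)).map Fin.valEmbedding := by
    rw [Fin.map_valEmbedding_univ, Nat.Iio_eq_range]
  have hps : powersetCard m (range n)
      = (powersetCard m (univ : Finset (Fin n))).map
          (Finset.mapEmbedding Fin.valEmbedding).toEmbedding := by
    rw [hrange, Finset.powersetCard_map]
  have hRHS : ∑ S ∈ powersetCard m (range n),
        (PowerSeries.X : PowerSeries ℤ)^((q - k) * (∑ i ∈ range n, q ^ i) - n - ∑ i ∈ S, q ^ i)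
      = ∑ S ∈ powersetCard m (univ : Finset (Fin n)),
          (PowerSeries.X : PowerSeries ℤ)^(Stmt2.EN n q k S) := by
    rw [hps, Finset.sum_map]
    refine Finset.sum_congr rfl fun S hS => ?_
    congr 1
    have h2 : ∑ i ∈ Finset.map Fin.valEmbedding S, q^i = ∑ i ∈ S, q^(i:ℕ) := by
      rw [Finset.sum_map]
      rfl
    have h3 : ((Finset.mapEmbedding Fin.valEmbedding).toEmbedding S)
        = Finset.map Fin.valEmbedding S := rfl
    rw [h3, h2]
    rfl
  have hcnt := Stmt2.mk_cnt_mul n (fun j => q^(j+1) - 1) hw1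
  have hmk : (PowerSeries.mk fun a : ℕ => (stmt2Count n q k m a : ℤ))
      = ∑ S ∈ powersetCard m (univ : Finset (Fin n)),
          (PowerSeries.X : PowerSeries ℤ)^(Stmt2.EN n q k S)
            * (PowerSeries.mk fun a => (Stmt2.cnt (fun j => q^(j+1)-1) n a : ℤ)) := by
    ext a
    rw [coeff_mk, map_sum]
    have hco : ∀ S ∈ powersetCard m (univ : Finset (Fin n)),
        (coeff a) ((PowerSeries.X : PowerSeries ℤ)^(Stmt2.EN n q k S)
            * (PowerSeries.mk fun a => (Stmt2.cnt (fun j => q^(j+1)-1) n a : ℤ)))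
          = ((if Stmt2.EN n q k S ≤ a
              then Stmt2.cnt (fun j => q^(j+1)-1) n (a - Stmt2.EN n q k S) else 0 : ℕ) : ℤ) := by
      intro S hS
      rw [PowerSeries.coeff_X_pow_mul']
      split_ifs with h
      · rw [coeff_mk]
      · simp
    rw [Finset.sum_congr rfl hco, Stmt2.count_eq n q k m a hn hq hk1 hk2, Nat.cast_sum]
    refine Finset.sum_congr rfl fun S hS => ?_
    rw [Stmt2.card_T n q k a hq hk2 S]
  rw [hmk, hRHS, Finset.sum_mul]
  refine Finset.sum_congr rfl fun S hS => ?_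
  rw [mul_assoc, hcnt, mul_one]
end

section
/- Fix n ≥ 1, q ≥ 2, 1 ≤ k ≤ q-2, 0 ≤ m ≤ n, and a subset {i_1 < ... < i_m} ⊆ {1,...,n}. With ρ_i = n-i, the map λ ↦ (λ̄_1,...,λ̄_n) defined by λ̄_n = λ_n - 1 and λ̄_{i-1} = λ_{i-1} + k - ((q-1)ρ_i + qλ_i) + [i ∈ {i_1,...,i_m}] for 2 ≤ i ≤ n, is a bijection from the set of dominant λ ∈ ℤ^n satisfying the conditions (q-1)ρ_i + (q-1)λ_i - k - [i ∈ {i_1,...,i_m}] ≥ 0 for all i and (q-1)ρ_i + qλ_i - [i ∈ {i_1,...,i_m}] ≤ λ_{i-1} + k for 2 ≤ i ≤ n, onto ℤ_+^n; moreover under this bijection (q-1)Σ_i ρ_i + (q-1)Σ_i λ_i - nk - m = -n + (q-k)(q^n-1)/(q-1) - Σ_{j=1}^m q^{i_j - 1} + Σ_{i=1}^n (q^i - 1)λ̄_i. -/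
set_option maxHeartbeats 1000000


open Finset

/-- The map `λ ↦ λ̄` of Statement 3 (indices `0`-based: the paper's `λ_i`, `1 ≤ i ≤ n`,
is `λ (i-1)` here, and `ρ_i = n - i` becomes `ρ i = n - 1 - i`):
`λ̄_n = λ_n - 1` and, for `2 ≤ i ≤ n`,
`λ̄_{i-1} = λ_{i-1} + k - ((q-1)ρ_i + qλ_i) + [i ∈ S]`. -/
noncomputable def stmt3Map (n q k : ℕ) (S : Finset (Fin n)) (l : Fin n → ℤ) : Fin n → ℤ :=
  fun i =>
    if h : (i : ℕ) = n - 1 then l i - 1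
    else
      l i + k - (((q : ℤ) - 1) * ((n : ℤ) - 1 - ((i : ℕ) + 1))
          + q * l ⟨(i : ℕ) + 1, by omega⟩)
        + (if (⟨(i : ℕ) + 1, by omega⟩ : Fin n) ∈ S then 1 else 0)

noncomputable def stmt3Inv (n q k : ℕ) (S : Finset (Fin n)) (lb : Fin n → ℤ) : ℕ → ℤ
  | 0 => (if h : 0 < n then lb ⟨n - 1, by omega⟩ else 0) + 1
  | (j + 1) =>
      if h : j + 1 < n then
        lb ⟨n - 1 - (j + 1), by omega⟩ - k + ((q : ℤ) - 1) * j
          + q * stmt3Inv n q k S lb j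
          - (if (⟨n - 1 - j, by omega⟩ : Fin n) ∈ S then 1 else 0)
      else 0

noncomputable def stmt3InvF (n q k : ℕ) (S : Finset (Fin n)) (lb : Fin n → ℤ) : Fin n → ℤ :=
  fun i => stmt3Inv n q k S lb (n - 1 - (i : ℕ))

lemma stmt3Inv_zero (n q k : ℕ) (S : Finset (Fin n)) (lb : Fin n → ℤ) (hn : 0 < n) :
    stmt3Inv n q k S lb 0 = lb ⟨n - 1, by omega⟩ + 1 := by
  simp [stmt3Inv, hn]

lemma stmt3Inv_succ (n q k : ℕ) (S : Finset (Fin n)) (lb : Fin n → ℤ) {j : ℕ}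
    (h : j + 1 < n) :
    stmt3Inv n q k S lb (j + 1)
      = lb ⟨n - 1 - (j + 1), by omega⟩ - k + ((q : ℤ) - 1) * j
          + q * stmt3Inv n q k S lb j
          - (if (⟨n - 1 - j, by omega⟩ : Fin n) ∈ S then 1 else 0) := by
  rw [stmt3Inv, dif_pos h]

lemma stmt3Map_last (n q k : ℕ) (S : Finset (Fin n)) (l : Fin n → ℤ) (i : Fin n)
    (h : (i : ℕ) = n - 1) : stmt3Map n q k S l i = l i - 1 := by
  rw [stmt3Map, dif_pos h]

lemma stmt3Map_ne (n q k : ℕ) (S : Finset (Fin n)) (l : Fin n → ℤ) (i : Fin n)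
    (h : (i : ℕ) ≠ n - 1) (h2 : (i : ℕ) + 1 < n) :
    stmt3Map n q k S l i
      = l i + k - (((q : ℤ) - 1) * ((n : ℤ) - 1 - ((i : ℕ) + 1)) + q * l ⟨(i : ℕ) + 1, h2⟩)
        + (if (⟨(i : ℕ) + 1, h2⟩ : Fin n) ∈ S then 1 else 0) := by
  rw [stmt3Map, dif_neg h]

lemma stmt3Inv_map (n q k : ℕ) (S : Finset (Fin n)) (l : Fin n → ℤ) :
    ∀ j : ℕ, (hj : j < n) →
      stmt3Inv n q k S (stmt3Map n q k S l) j = l ⟨n - 1 - j, by omega⟩ := by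
  intro j
  induction j with
  | zero =>
    intro hj
    rw [stmt3Inv_zero n q k S _ hj, stmt3Map_last n q k S l _ rfl]
    have : (⟨n - 1 - 0, by omega⟩ : Fin n) = (⟨n - 1, by omega⟩ : Fin n) := rfl
    rw [this]
    ring
  | succ j ih =>
    intro hj
    rw [stmt3Inv_succ n q k S _ hj, ih (by omega)]
    rw [stmt3Map_ne n q k S l ⟨n - 1 - (j + 1), by omega⟩ (by simp only [Fin.val_mk]; omega)
      (by simp only [Fin.val_mk]; omega)]
    have h3 : (⟨(⟨n - 1 - (j + 1), by omega⟩ : Fin n).val + 1, by simp only [Fin.val_mk]; omega⟩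
        : Fin n) = ⟨n - 1 - j, by omega⟩ := by
      apply Fin.ext; simp only [Fin.val_mk]; omega
    rw [h3]
    have h4 : ((n : ℤ) - 1 - ((⟨n - 1 - (j + 1), by omega⟩ : Fin n).val + 1)) = (j : ℤ) := by
      simp only [Fin.val_mk]
      have : ((n - 1 - (j + 1) : ℕ) : ℤ) = (n : ℤ) - 2 - j := by omega
      rw [this]; ring
    rw [h4]
    ring

lemma stmt3Map_inv (n q k : ℕ) (S : Finset (Fin n)) (lb : Fin n → ℤ) (i : Fin n) :
    stmt3Map n q k S (stmt3InvF n q k S lb) i = lb i := by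
  have hn : 0 < n := i.pos
  rcases eq_or_ne (i : ℕ) (n - 1) with h | h
  · rw [stmt3Map_last n q k S _ i h, stmt3InvF]
    rw [show n - 1 - (i : ℕ) = 0 by omega, stmt3Inv_zero n q k S _ hn]
    rw [show (⟨n - 1, by omega⟩ : Fin n) = i from Fin.ext h.symm]
    ring
  · have hi : (i : ℕ) < n - 1 := by omega
    rw [stmt3Map_ne n q k S _ i h (by omega)]
    obtain ⟨j, hj⟩ : ∃ j, n - 1 - (i : ℕ) = j + 1 := ⟨n - 2 - (i : ℕ), by omega⟩
    have e1 : stmt3InvF n q k S lb i = stmt3Inv n q k S lb (j + 1) := by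
      rw [stmt3InvF, hj]
    rw [e1, stmt3Inv_succ n q k S lb (by omega)]
    have e2 : (⟨n - 1 - (j + 1), by omega⟩ : Fin n) = i := by
      apply Fin.ext; simp only [Fin.val_mk]; omega
    have e3 : (⟨n - 1 - j, by omega⟩ : Fin n) = (⟨(i : ℕ) + 1, by omega⟩ : Fin n) := by
      apply Fin.ext; simp only [Fin.val_mk]; omega
    have e4 : stmt3InvF n q k S lb ⟨(i : ℕ) + 1, by omega⟩ = stmt3Inv n q k S lb j := by
      rw [stmt3InvF]; simp only [Fin.val_mk]
      rw [show n - 1 - ((i : ℕ) + 1) = j by omega]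
    rw [e2, e3, e4]
    have e5 : ((n : ℤ) - 1 - ((i : ℕ) + 1)) = (j : ℤ) := by
      have hi2 := i.isLt
      omega
    rw [e5]
    ring

lemma ind_nonneg {n : ℕ} (S : Finset (Fin n)) (x : Fin n) :
    (0 : ℤ) ≤ (if x ∈ S then 1 else 0) := by split_ifs <;> norm_num

lemma ind_le_one {n : ℕ} (S : Finset (Fin n)) (x : Fin n) :
    (if x ∈ S then (1 : ℤ) else 0) ≤ 1 := by split_ifs <;> norm_num

/-- Condition (B) holds along the inverse recursion. -/
lemma stmt3Inv_B (n q k : ℕ) (S : Finset (Fin n)) (lb : Fin n → ℤ)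
    (hq : 2 ≤ q) (hk1 : 1 ≤ k) (hk2 : k ≤ q - 2) (hlb : ∀ i, 0 ≤ lb i) :
    ∀ j : ℕ, (hj : j < n) →
      (k : ℤ) + (if (⟨n - 1 - j, by omega⟩ : Fin n) ∈ S then 1 else 0)
        ≤ ((q : ℤ) - 1) * j + ((q : ℤ) - 1) * stmt3Inv n q k S lb j := by
  intro j
  induction j with
  | zero =>
    intro hj
    rw [stmt3Inv_zero n q k S _ hj]
    have h1 : (0 : ℤ) ≤ lb ⟨n - 1, by omega⟩ := hlb _
    have h2 : ((q : ℤ) - 1) * lb ⟨n - 1, by omega⟩ ≥ 0 := mul_nonneg (by push_cast; omega) h1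
    have hk2' : (k : ℤ) ≤ (q : ℤ) - 2 := by omega
    have := ind_le_one S (⟨n - 1 - 0, by omega⟩ : Fin n)
    push_cast
    nlinarith
  | succ j ih =>
    intro hj
    have ihj := ih (by omega)
    rw [stmt3Inv_succ n q k S _ hj]
    have h1 : (0 : ℤ) ≤ lb ⟨n - 1 - (j + 1), by omega⟩ := hlb _
    have hq' : (0 : ℤ) ≤ (q : ℤ) := by positivity
    have hmul := mul_le_mul_of_nonneg_left ihj hq'
    have hs1 := ind_nonneg S (⟨n - 1 - j, by omega⟩ : Fin n)
    have hs2 := ind_le_one S (⟨n - 1 - (j + 1), by omega⟩ : Fin n)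
    have hq2 : (2 : ℤ) ≤ (q : ℤ) := by exact_mod_cast hq
    push_cast
    nlinarith [mul_nonneg (by linarith : (0:ℤ) ≤ (q:ℤ) - 1) h1]

lemma stmt3InvF_B (n q k : ℕ) (S : Finset (Fin n)) (lb : Fin n → ℤ)
    (hq : 2 ≤ q) (hk1 : 1 ≤ k) (hk2 : k ≤ q - 2) (hlb : ∀ i, 0 ≤ lb i) (i : Fin n) :
    0 ≤ ((q : ℤ) - 1) * ((n : ℤ) - 1 - (i : ℕ)) + ((q : ℤ) - 1) * stmt3InvF n q k S lb i - k
      - (if i ∈ S then 1 else 0) := by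
  have hi := i.isLt
  have hB := stmt3Inv_B n q k S lb hq hk1 hk2 hlb (n - 1 - (i : ℕ)) (by omega)
  rw [show (⟨n - 1 - (n - 1 - (i : ℕ)), by omega⟩ : Fin n) = i from Fin.ext (by
    simp only [Fin.val_mk]; omega)] at hB
  rw [stmt3InvF]
  have : ((n - 1 - (i : ℕ) : ℕ) : ℤ) = (n : ℤ) - 1 - (i : ℕ) := by omega
  rw [this] at hB
  linarith

lemma stmt3InvF_antitone (n q k : ℕ) (S : Finset (Fin n)) (lb : Fin n → ℤ)
    (hq : 2 ≤ q) (hk1 : 1 ≤ k) (hk2 : k ≤ q - 2) (hlb : ∀ i, 0 ≤ lb i) :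
    Antitone (stmt3InvF n q k S lb) := by
  have hF : Antitone (fun t : ℕ => stmt3Inv n q k S lb (n - 1 - t)) := by
    apply antitone_nat_of_succ_le
    intro t
    show stmt3Inv n q k S lb (n - 1 - (t + 1)) ≤ stmt3Inv n q k S lb (n - 1 - t)
    rcases le_or_gt (n - 1) t with h | h
    · rw [show n - 1 - (t + 1) = n - 1 - t by omega]
    · obtain ⟨j, hj⟩ : ∃ j, n - 1 - t = j + 1 := ⟨n - 2 - t, by omega⟩
      rw [hj, show n - 1 - (t + 1) = j by omega]
      rw [stmt3Inv_succ n q k S _ (by omega)]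
      have hB := stmt3Inv_B n q k S lb hq hk1 hk2 hlb j (by omega)
      have h1 : (0 : ℤ) ≤ lb ⟨n - 1 - (j + 1), by omega⟩ := hlb _
      linarith
  intro i j hij
  exact hF hij

lemma stmt3InvF_C (n q k : ℕ) (S : Finset (Fin n)) (lb : Fin n → ℤ)
    (hq : 2 ≤ q) (hk1 : 1 ≤ k) (hk2 : k ≤ q - 2) (hlb : ∀ i, 0 ≤ lb i)
    (i : Fin n) (hi : 0 < (i : ℕ)) :
    ((q : ℤ) - 1) * ((n : ℤ) - 1 - (i : ℕ)) + q * stmt3InvF n q k S lb i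
        - (if i ∈ S then (1 : ℤ) else 0)
      ≤ stmt3InvF n q k S lb ⟨(i : ℕ) - 1, by omega⟩ + k := by
  have hlt := i.isLt
  obtain ⟨j, hj⟩ : ∃ j, n - 1 - (i : ℕ) = j := ⟨n - 1 - (i : ℕ), rfl⟩
  have e1 : stmt3InvF n q k S lb ⟨(i : ℕ) - 1, by omega⟩ = stmt3Inv n q k S lb (j + 1) := by
    rw [stmt3InvF]; simp only [Fin.val_mk]
    rw [show n - 1 - ((i : ℕ) - 1) = j + 1 by omega]
  rw [e1, stmt3Inv_succ n q k S _ (by omega)]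
  have e2 : (⟨n - 1 - j, by omega⟩ : Fin n) = i := Fin.ext (by simp only [Fin.val_mk]; omega)
  have e3 : stmt3Inv n q k S lb j = stmt3InvF n q k S lb i := by
    rw [stmt3InvF, hj]
  rw [e2, e3]
  have h1 : (0 : ℤ) ≤ lb ⟨n - 1 - (j + 1), by omega⟩ := hlb _
  have e4 : ((j : ℕ) : ℤ) = (n : ℤ) - 1 - (i : ℕ) := by omega
  rw [← e4]
  linarith

lemma stmt3Map_nonneg (n q k : ℕ) (S : Finset (Fin n)) (l : Fin n → ℤ)
    (hq : 2 ≤ q) (hk1 : 1 ≤ k)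
    (hB : ∀ i : Fin n,
      0 ≤ ((q : ℤ) - 1) * ((n : ℤ) - 1 - (i : ℕ)) + ((q : ℤ) - 1) * l i - k
            - (if i ∈ S then 1 else 0))
    (hC : ∀ i : Fin n, 0 < (i : ℕ) →
      ((q : ℤ) - 1) * ((n : ℤ) - 1 - (i : ℕ)) + q * l i - (if i ∈ S then (1 : ℤ) else 0)
        ≤ l ⟨(i : ℕ) - 1, by omega⟩ + k)
    (i : Fin n) : 0 ≤ stmt3Map n q k S l i := by
  have hlt := i.isLt
  rcases eq_or_ne (i : ℕ) (n - 1) with h | h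
  · rw [stmt3Map_last n q k S l i h]
    have hBi := hB i
    rw [h] at hBi
    have e : ((n : ℤ) - 1 - ((n - 1 : ℕ) : ℕ)) = 0 := by omega
    rw [e, mul_zero] at hBi
    have hs := ind_nonneg S i
    by_contra hneg
    push_neg at hneg
    have hle : l i ≤ 0 := by linarith
    have : ((q : ℤ) - 1) * l i ≤ 0 :=
      mul_nonpos_of_nonneg_of_nonpos (by push_cast; omega) hle
    have hk1' : (1 : ℤ) ≤ (k : ℤ) := by exact_mod_cast hk1
    linarith
  · have h2 : (i : ℕ) + 1 < n := by omega
    rw [stmt3Map_ne n q k S l i h h2]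
    have hCi := hC ⟨(i : ℕ) + 1, h2⟩ (by simp only [Fin.val_mk]; omega)
    rw [show (⟨((⟨(i : ℕ) + 1, h2⟩ : Fin n) : ℕ) - 1, by simp only [Fin.val_mk]; omega⟩ : Fin n)
      = i from Fin.ext (by simp only [Fin.val_mk]; omega)] at hCi
    have e : (((⟨(i : ℕ) + 1, h2⟩ : Fin n) : ℕ) : ℤ) = ((i : ℕ) : ℤ) + 1 := by
      simp only [Fin.val_mk]; push_cast; ring
    rw [e] at hCi
    linarith
lemma keyId (q k : ℤ) (n : ℕ) :
    (q - 1) * (∑ i ∈ range (n + 1), ((n : ℤ) - i)) - ((n : ℤ) + 1) * k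
      = -((n : ℤ) + 1) + (q - k) * (∑ i ∈ range (n + 1), q ^ i) - (q ^ (n + 1) - 1)
        + ∑ i ∈ range n, (q ^ (i + 1) - 1) * (k - (q - 1) * ((n : ℤ) - 1 - i)) := by
  induction n with
  | zero => simp; ring
  | succ n ih =>
    have hP' : ∑ i ∈ range (n + 2), ((n : ℤ) + 1 - i)
        = (∑ i ∈ range (n + 1), ((n : ℤ) - i)) + ((n : ℤ) + 1) := by
      rw [sum_range_succ]
      have h1 : ∀ i ∈ range (n + 1), ((n : ℤ) + 1 - i) = ((n : ℤ) - i) + 1 := by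
        intros; ring
      rw [sum_congr rfl h1, sum_add_distrib, sum_const, card_range]
      push_cast; ring
    have hT' : ∑ i ∈ range (n + 1), (q ^ (i + 1) - 1) * (k - (q - 1) * ((n : ℤ) - i))
        = (∑ i ∈ range n, (q ^ (i + 1) - 1) * (k - (q - 1) * ((n : ℤ) - 1 - i)))
          - (q - 1) * (q * (∑ i ∈ range n, q ^ i) - n) + (q ^ (n + 1) - 1) * k := by
      rw [sum_range_succ]
      have e1 : ∀ i ∈ range n, (q ^ (i + 1) - 1) * (k - (q - 1) * ((n : ℤ) - i))
          = (q ^ (i + 1) - 1) * (k - (q - 1) * ((n : ℤ) - 1 - i)) - (q - 1) * (q ^ (i + 1) - 1) := by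
        intros; ring
      rw [sum_congr rfl e1, sum_sub_distrib]
      have e2 : ∑ i ∈ range n, (q - 1) * (q ^ (i + 1) - 1)
          = (q - 1) * (q * (∑ i ∈ range n, q ^ i) - n) := by
        have e3 : ∀ i ∈ range n, (q - 1) * (q ^ (i + 1) - 1)
            = (q - 1) * q * q ^ i - (q - 1) := by
          intros; ring
        rw [sum_congr rfl e3, sum_sub_distrib, sum_const, card_range, ← mul_sum]
        push_cast; ring
      rw [e2]; ring
    have hgeom : (∑ i ∈ range n, q ^ i) * (q - 1) = q ^ n - 1 := geom_sum_mul q n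
    have hG' : ∑ i ∈ range (n + 2), q ^ i = (∑ i ∈ range (n + 1), q ^ i) + q ^ (n + 1) :=
      sum_range_succ _ _
    have hGn : ∑ i ∈ range (n + 1), q ^ i = (∑ i ∈ range n, q ^ i) + q ^ n :=
      sum_range_succ _ _
    push_cast
    have hT0 : ∑ x ∈ range (n + 1), (q ^ (x + 1) - 1) * (k - (q - 1) * ((n : ℤ) + 1 - 1 - x))
        = ∑ i ∈ range (n + 1), (q ^ (i + 1) - 1) * (k - (q - 1) * ((n : ℤ) - i)) :=
      sum_congr rfl (by intros; ring)
    have hG2 : ∑ i ∈ range (n + 1 + 1), q ^ i = (∑ i ∈ range (n + 1), q ^ i) + q ^ (n + 1) :=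
      sum_range_succ _ _
    rw [hP', hT0, hT', hG2]
    push_cast at ih
    linear_combination ih + q * hgeom

lemma stmt3_sum (n q k : ℕ) (S : Finset (Fin n)) (l : Fin n → ℤ) (hn : 1 ≤ n) :
    ∑ i : Fin n, ((q : ℤ) ^ ((i : ℕ) + 1) - 1) * stmt3Map n q k S l i
      = ((q : ℤ) - 1) * (∑ i : Fin n, l i) - ((q : ℤ) ^ n - 1)
        + (∑ i ∈ range (n - 1),
            ((q : ℤ) ^ (i + 1) - 1) * ((k : ℤ) - ((q : ℤ) - 1) * ((n : ℤ) - 2 - i)))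
        + ((∑ i ∈ S, (q : ℤ) ^ (i : ℕ)) - S.card) := by
  obtain ⟨N, rfl⟩ : ∃ N, n = N + 1 := ⟨n - 1, by omega⟩
  -- ℕ-indexed versions of the data
  set L : ℕ → ℤ := fun t => if h : t < (N + 1) then l ⟨t, h⟩ else 0 with hL
  set SI : ℕ → ℤ := fun t => if h : t < (N + 1) then (if (⟨t, h⟩ : Fin (N + 1)) ∈ S then 1 else 0) else 0
    with hSI
  set MM : ℕ → ℤ := fun t => if h : t < (N + 1) then stmt3Map (N + 1) q k S l ⟨t, h⟩ else 0 with hMM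
  -- convert the Fin sums to range sums
  have hconv : ∑ i : Fin (N + 1), ((q : ℤ) ^ ((i : ℕ) + 1) - 1) * stmt3Map (N + 1) q k S l i
      = ∑ t ∈ range (N + 1), ((q : ℤ) ^ (t + 1) - 1) * MM t := by
    rw [← Fin.sum_univ_eq_sum_range (fun t => ((q : ℤ) ^ (t + 1) - 1) * MM t) (N + 1)]
    refine Finset.sum_congr rfl fun i _ => ?_
    have : MM (i : ℕ) = stmt3Map (N + 1) q k S l i := by
      rw [hMM]; simp only [i.isLt, dif_pos]
    rw [this]
  have hconvL : ∑ t ∈ range (N + 1), L t = ∑ i : Fin (N + 1), l i := by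
    rw [← Fin.sum_univ_eq_sum_range L (N + 1)]
    refine Finset.sum_congr rfl fun i _ => ?_
    rw [hL]; simp only [i.isLt, dif_pos]
  have hconvS : ∑ t ∈ range (N + 1), ((q : ℤ) ^ t - 1) * SI t
      = (∑ i ∈ S, (q : ℤ) ^ (i : ℕ)) - S.card := by
    rw [← Fin.sum_univ_eq_sum_range (fun t => ((q : ℤ) ^ t - 1) * SI t) (N + 1)]
    have e : ∀ i : Fin (N + 1), ((q : ℤ) ^ (i : ℕ) - 1) * SI (i : ℕ)
        = if i ∈ S then ((q : ℤ) ^ (i : ℕ) - 1) else 0 := by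
      intro i
      rw [hSI]; simp only [i.isLt, dif_pos]
      split_ifs <;> ring
    rw [Finset.sum_congr rfl fun i _ => e i]
    rw [Finset.sum_ite_mem, Finset.univ_inter, Finset.sum_sub_distrib, Finset.sum_const,
      nsmul_eq_mul, mul_one]
  -- evaluate MM
  have hMMlast : MM N = L N - 1 := by
    rw [hMM, hL]
    simp only [show N < (N + 1) by omega, dif_pos]
    rw [stmt3Map_last (N + 1) q k S l ⟨N, by omega⟩ rfl]
  have hMMlt : ∀ t, t < N → ((q : ℤ) ^ (t + 1) - 1) * MM t
      = (((q : ℤ) ^ (t + 1) - 1) * L t - ((q : ℤ) ^ (t + 2) - 1) * L (t + 1))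
        + ((q : ℤ) - 1) * L (t + 1)
        + ((q : ℤ) ^ (t + 1) - 1) * ((k : ℤ) - ((q : ℤ) - 1) * (((N + 1) : ℤ) - 2 - t))
        + ((q : ℤ) ^ (t + 1) - 1) * SI (t + 1) := by
    intro t ht
    have h1 : t < (N + 1) := by omega
    have h2 : t + 1 < (N + 1) := by omega
    have e1 : MM t = stmt3Map (N + 1) q k S l ⟨t, h1⟩ := by
      rw [hMM]; simp only [h1, dif_pos]
    have e2 : L t = l ⟨t, h1⟩ := by rw [hL]; simp only [h1, dif_pos]
    have e3 : L (t + 1) = l ⟨t + 1, h2⟩ := by rw [hL]; simp only [h2, dif_pos]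
    have e4 : SI (t + 1) = (if (⟨t + 1, h2⟩ : Fin (N + 1)) ∈ S then 1 else 0) := by
      rw [hSI]; simp only [h2, dif_pos]
    rw [e1, e2, e3, e4,
      stmt3Map_ne (N + 1) q k S l ⟨t, h1⟩ (by simp only [Fin.val_mk]; omega)
        (by simp only [Fin.val_mk]; omega)]
    have e5 : (⟨((⟨t, h1⟩ : Fin (N + 1)) : ℕ) + 1, by simp only [Fin.val_mk]; omega⟩ : Fin (N + 1))
        = ⟨t + 1, h2⟩ := rfl
    rw [e5]
    simp only [Fin.val_mk]
    push_cast
    ring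
  -- split the sum
  rw [hconv, sum_range_succ, hMMlast]
  rw [Finset.sum_congr rfl fun t ht => hMMlt t (mem_range.mp ht)]
  rw [sum_add_distrib, sum_add_distrib, sum_add_distrib]
  rw [Finset.sum_range_sub' (fun t => ((q : ℤ) ^ (t + 1) - 1) * L t)]
  -- ∑ L (t+1) over range N
  have hshift : ∑ t ∈ range N, L (t + 1) = (∑ t ∈ range (N + 1), L t) - L 0 := by
    rw [Finset.sum_range_succ' L N]
    ring
  have hshiftS : ∑ t ∈ range N, ((q : ℤ) ^ (t + 1) - 1) * SI (t + 1)
      = ∑ t ∈ range (N + 1), ((q : ℤ) ^ t - 1) * SI t := by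
    rw [Finset.sum_range_succ' (fun t => ((q : ℤ) ^ t - 1) * SI t) N]
    norm_num
  rw [← mul_sum, hshift, hshiftS, hconvS, hconvL, show N + 1 - 1 = N from rfl]
  push_cast
  ring

/-- Fix `n ≥ 1`, `q ≥ 2`, `1 ≤ k ≤ q-2`, `0 ≤ m ≤ n`, and a subset
`S = {i_1 < ⋯ < i_m} ⊆ {1,…,n}` of cardinality `m`.  The map `λ ↦ λ̄` above is a bijection
from the set of dominant `λ ∈ ℤ^n` satisfying
`(q-1)ρ_i + (q-1)λ_i - k - [i ∈ S] ≥ 0` for all `i`, and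
`(q-1)ρ_i + qλ_i - [i ∈ S] ≤ λ_{i-1} + k` for `2 ≤ i ≤ n`,
onto `ℤ₊ⁿ`; moreover under this bijection
`(q-1)∑ρ_i + (q-1)∑λ_i - nk - m
   = -n + (q-k)(q^n-1)/(q-1) - ∑_{j=1}^m q^{i_j-1} + ∑_{i=1}^n (q^i - 1)λ̄_i`
(with `(q^n-1)/(q-1) = ∑_{i<n} q^i` and `∑_{j=1}^m q^{i_j-1} = ∑_{i∈S} q^i` in `0`-based
indexing). -/
theorem stmt3 (n q k m : ℕ) (hn : 1 ≤ n) (hq : 2 ≤ q) (hk1 : 1 ≤ k) (hk2 : k ≤ q - 2)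
    (hm : m ≤ n) (S : Finset (Fin n)) (hS : S.card = m) :
    Set.BijOn (stmt3Map n q k S)
      {l : Fin n → ℤ | Antitone l ∧
        (∀ i : Fin n,
          0 ≤ ((q : ℤ) - 1) * ((n : ℤ) - 1 - (i : ℕ)) + ((q : ℤ) - 1) * l i - k
                - (if i ∈ S then 1 else 0)) ∧
        (∀ i : Fin n, 0 < (i : ℕ) →
          ((q : ℤ) - 1) * ((n : ℤ) - 1 - (i : ℕ)) + q * l i - (if i ∈ S then (1 : ℤ) else 0)
            ≤ l ⟨(i : ℕ) - 1, by omega⟩ + k)}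
      {lb : Fin n → ℤ | ∀ i, 0 ≤ lb i}
    ∧ ∀ l : Fin n → ℤ,
        l ∈ {l : Fin n → ℤ | Antitone l ∧
          (∀ i : Fin n,
            0 ≤ ((q : ℤ) - 1) * ((n : ℤ) - 1 - (i : ℕ)) + ((q : ℤ) - 1) * l i - k
                  - (if i ∈ S then 1 else 0)) ∧
          (∀ i : Fin n, 0 < (i : ℕ) →
            ((q : ℤ) - 1) * ((n : ℤ) - 1 - (i : ℕ)) + q * l i - (if i ∈ S then (1 : ℤ) else 0)
              ≤ l ⟨(i : ℕ) - 1, by omega⟩ + k)} →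
        ((q : ℤ) - 1) * (∑ i : Fin n, ((n : ℤ) - 1 - (i : ℕ)))
            + ((q : ℤ) - 1) * (∑ i : Fin n, l i) - n * k - m
          = -(n : ℤ) + ((q : ℤ) - k) * (∑ i ∈ range n, (q : ℤ) ^ i)
              - (∑ i ∈ S, (q : ℤ) ^ (i : ℕ))
              + ∑ i : Fin n, ((q : ℤ) ^ ((i : ℕ) + 1) - 1) * stmt3Map n q k S l i := by
  constructor
  · have hlinv : ∀ l : Fin n → ℤ, stmt3InvF n q k S (stmt3Map n q k S l) = l := by
      intro l
      funext i
      have hi := i.isLt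
      rw [stmt3InvF, stmt3Inv_map n q k S l (n - 1 - (i : ℕ)) (by omega)]
      congr 1
      exact Fin.ext (by simp only [Fin.val_mk]; omega)
    have hrinv : ∀ lb : Fin n → ℤ, stmt3Map n q k S (stmt3InvF n q k S lb) = lb := by
      intro lb; funext i; exact stmt3Map_inv n q k S lb i
    refine Set.InvOn.bijOn (f' := stmt3InvF n q k S)
      ⟨fun l _ => hlinv l, fun lb _ => hrinv lb⟩ ?_ ?_
    · rintro l ⟨hA, hB, hC⟩ i
      exact stmt3Map_nonneg n q k S l hq hk1 hB hC i
    · intro lb hlb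
      exact ⟨stmt3InvF_antitone n q k S lb hq hk1 hk2 hlb,
        fun i => stmt3InvF_B n q k S lb hq hk1 hk2 hlb i,
        fun i hi => stmt3InvF_C n q k S lb hq hk1 hk2 hlb i hi⟩
  · intro l _
    obtain ⟨N, rfl⟩ : ∃ N, n = N + 1 := ⟨n - 1, by omega⟩
    have hsum := stmt3_sum (N + 1) q k S l (by omega)
    rw [hS] at hsum
    have hkey := keyId (q : ℤ) (k : ℤ) N
    have hP : ∑ i : Fin (N + 1), (((N + 1 : ℕ) : ℤ) - 1 - ((i : ℕ) : ℤ))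
        = ∑ i ∈ range (N + 1), ((N : ℤ) - i) := by
      rw [← Fin.sum_univ_eq_sum_range (fun t => ((N : ℤ) - t)) (N + 1)]
      refine Finset.sum_congr rfl fun i _ => ?_
      push_cast; ring
    have hK : ∑ i ∈ range (N + 1 - 1),
          ((q : ℤ) ^ (i + 1) - 1) * ((k : ℤ) - ((q : ℤ) - 1) * (((N + 1 : ℕ) : ℤ) - 2 - i))
        = ∑ i ∈ range N, ((q : ℤ) ^ (i + 1) - 1) * ((k : ℤ) - ((q : ℤ) - 1) * ((N : ℤ) - 1 - i)) := by
      rw [show N + 1 - 1 = N from rfl]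
      refine Finset.sum_congr rfl fun i _ => ?_
      push_cast; ring
    rw [hK] at hsum
    rw [hP, hsum]
    push_cast
    push_cast at hkey
    linarith [hkey]
end
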